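/- arXiv:1212.6317 — 5 statements merged into one kernel-verified Lean document; each statement's English description precedes it below -/
import Mathlib

section
/- Let n ≥ 1 and let λ ↦ p_λ be a Z-homotopy of degree n, i.e. a map from [0,1] to ℂ[X] such that every p_λ has degree n, each coefficient of p_λ is a continuous function of λ, p_0 and p_1 each have exactly two distinct critical values, and p_λ has exactly three distinct critical values for every λ ∈ (0,1). Suppose the two critical values of p_0 are α ≠ β, that p_0 − α has a root of multiplicity at least 3, and that p_0 − β also has a root of multiplicity at least 3. Then it is not the case that for every critical value γ of p_1 all roots of p_1 − γ have multiplicity at most 2. (Equivalently: a plane tree having both a white vertex of degree ≥ 3 and a black vertex of degree ≥ 3 is not Z-homotopic to a chain.) -/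
open Polynomial

/-- The set of critical values of a polynomial `p`: values of `p` at the roots of `p'`. -/
noncomputable def criticalValues (p : ℂ[X]) : Set ℂ :=
  (fun x => p.eval x) '' {x : ℂ | p.derivative.eval x = 0}


open Filter Topology Metric Bornology


-- eval convergence along sequences
lemma eval_tendsto {N : ℕ} {q : ℕ → ℂ[X]} {Q : ℂ[X]} (h : ∀ k, (q k).natDegree ≤ N)
    (hQ : Q.natDegree ≤ N)
    (hconv : ∀ i, Tendsto (fun k => (q k).coeff i) atTop (nhds (Q.coeff i)))
    {z : ℕ → ℂ} {w : ℂ} (hz : Tendsto z atTop (nhds w)) :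
    Tendsto (fun k => (q k).eval (z k)) atTop (nhds (Q.eval w)) := by
  have hrw : ∀ k, (q k).eval (z k) = ∑ i ∈ Finset.range (N+1), (q k).coeff i * (z k)^i := by
    intro k; exact eval_eq_sum_range' (Nat.lt_succ_of_le (h k)) _
  rw [show Q.eval w = ∑ i ∈ Finset.range (N+1), Q.coeff i * w^i from
    eval_eq_sum_range' (Nat.lt_succ_of_le hQ) _]
  simp only [hrw]
  exact tendsto_finset_sum _ fun i _ => ((hconv i).mul (hz.pow i))

lemma root_bound {q : ℂ[X]} {d : ℕ} (hd : q.natDegree = d) (hlc : q.coeff d ≠ 0)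
    {A a0 : ℝ} (h0 : 0 < a0) (ha : a0 ≤ ‖q.coeff d‖) (hA : ∀ i, ‖q.coeff i‖ ≤ A)
    {z : ℂ} (hz : q.eval z = 0) : ‖z‖ ≤ max 1 (d * A / a0) := by
  rcases le_or_gt ‖z‖ 1 with h | h
  · exact le_max_of_le_left h
  have hd1 : 1 ≤ d := by
    rcases Nat.eq_zero_or_pos d with h0' | h0'
    · exfalso
      subst h0'
      have : q = C (q.coeff 0) := (Polynomial.eq_C_of_natDegree_eq_zero hd)
      rw [this] at hz
      simp at hz
      exact hlc hz
    · exact h0'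
  -- eval as sum
  have hev : ∑ i ∈ Finset.range (d+1), q.coeff i * z^i = 0 := by
    rw [← eval_eq_sum_range' (Nat.lt_succ_of_le hd.le) z]; exact hz
  have hsplit : q.coeff d * z^d = -∑ i ∈ Finset.range d, q.coeff i * z^i := by
    rw [Finset.sum_range_succ] at hev; linear_combination hev
  have hnorm : a0 * ‖z‖^d ≤ d * A * ‖z‖^(d-1) := by
    calc a0 * ‖z‖^d ≤ ‖q.coeff d‖ * ‖z‖^d := by
          apply mul_le_mul_of_nonneg_right ha (by positivity)
      _ = ‖q.coeff d * z^d‖ := by rw [norm_mul, norm_pow]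
      _ = ‖∑ i ∈ Finset.range d, q.coeff i * z^i‖ := by rw [hsplit, norm_neg]
      _ ≤ ∑ i ∈ Finset.range d, ‖q.coeff i * z^i‖ := norm_sum_le _ _
      _ ≤ ∑ i ∈ Finset.range d, A * ‖z‖^(d-1) := by
          apply Finset.sum_le_sum
          intro i hi
          have hi' := Finset.mem_range.mp hi
          rw [norm_mul, norm_pow]
          apply mul_le_mul (hA i) (pow_le_pow_right₀ h.le (by omega)) (by positivity)
          exact (norm_nonneg _).trans (hA 0)
      _ = d * A * ‖z‖^(d-1) := by rw [Finset.sum_const, Finset.card_range]; ring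
  have hzpow : ‖z‖^d = ‖z‖^(d-1) * ‖z‖ := by
    rw [← pow_succ]; congr 1; omega
  have hpos : (0:ℝ) < ‖z‖^(d-1) := by positivity
  rw [hzpow] at hnorm
  have key : a0 * ‖z‖ ≤ d * A := by nlinarith
  refine le_max_of_le_right ?_
  rw [le_div_iff₀ h0]
  nlinarith

lemma multiset_enum {d : ℕ} (s : Multiset ℂ) (h : Multiset.card s = d) :
    ∃ r : Fin d → ℂ, Multiset.map r Finset.univ.val = s := by
  obtain ⟨l, hl⟩ : ∃ l : List ℂ, ↑l = s := ⟨s.toList, Multiset.coe_toList s⟩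
  subst hl
  have hl2 : l.length = d := by simpa using h
  subst hl2
  exact ⟨l.get, by rw [Fin.univ_val_map, List.ofFn_get]⟩

lemma card_roots_complex {q : ℂ[X]} : Multiset.card q.roots = q.natDegree :=
  splits_iff_card_roots.mp (IsAlgClosed.splits q)

lemma eval_eq_of_enum {d : ℕ} {q : ℂ[X]} {r : Fin d → ℂ}
    (h : Multiset.map r Finset.univ.val = q.roots) (hd : q.natDegree = d) (z : ℂ) :
    q.eval z = q.coeff d * ∏ i, (z - r i) := by
  conv_lhs => rw [(IsAlgClosed.splits q).eq_prod_roots]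
  rw [eval_mul, eval_C, ← h, Multiset.map_map]
  congr 1
  · rw [← hd, coeff_natDegree]
  · rw [eval_multiset_prod, Multiset.map_map, Finset.prod]
    congr 1
    apply Multiset.map_congr rfl
    intro i _
    simp

lemma roots_matching {d : ℕ} {q : ℕ → ℂ[X]} {Q : ℂ[X]}
    (hdq : ∀ k, (q k).natDegree = d) (hdQ : Q.natDegree = d) (hQ0 : Q ≠ 0)
    (hconv : ∀ i, Tendsto (fun k => (q k).coeff i) atTop (nhds (Q.coeff i)))
    {ε : ℝ} (hε : 0 < ε) :
    ∀ᶠ k in atTop, ∃ r R : Fin d → ℂ,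
      Multiset.map r Finset.univ.val = (q k).roots ∧
      Multiset.map R Finset.univ.val = Q.roots ∧ ∀ i, dist (r i) (R i) < ε := by
  by_contra hcon
  rw [Filter.not_eventually] at hcon
  -- leading coefficient lower bound
  have hL0 : (0:ℝ) < ‖Q.coeff d‖ := by
    rw [norm_pos_iff]
    rw [← hdQ]
    exact mt leadingCoeff_eq_zero.mp hQ0
  have hlc : ∀ᶠ k in atTop, ‖Q.coeff d‖/2 ≤ ‖(q k).coeff d‖ := by
    exact (hconv d).norm.eventually (eventually_ge_nhds (by linarith))
  -- coefficient upper bounds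
  have hCi : ∀ i : ℕ, ∃ Ci : ℝ, 0 ≤ Ci ∧ ∀ k, ‖(q k).coeff i‖ ≤ Ci := by
    intro i
    obtain ⟨Ci, hCi⟩ := ((hconv i).norm.bddAbove_range)
    exact ⟨max Ci 0, le_max_right _ _,
      fun k => le_max_of_le_left (hCi (Set.mem_range_self k))⟩
  choose Cf hCf0 hCf using hCi
  set A : ℝ := ∑ i ∈ Finset.range (d+1), Cf i with hA
  have hAnn : 0 ≤ A := Finset.sum_nonneg fun i _ => hCf0 i
  have hAb : ∀ k i, ‖(q k).coeff i‖ ≤ A := by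
    intro k i
    rcases le_or_gt i d with hi | hi
    · calc ‖(q k).coeff i‖ ≤ Cf i := hCf i k
        _ ≤ A := Finset.single_le_sum (f := Cf) (fun j _ => hCf0 j)
            (Finset.mem_range.mpr (by omega))
    · have : (q k).coeff i = 0 := coeff_eq_zero_of_natDegree_lt (by rw [hdq k]; omega)
      rw [this, norm_zero]; exact hAnn
  set M : ℝ := max 1 (d * A / (‖Q.coeff d‖/2)) with hM
  -- extract failing subsequence on which lc bound holds
  obtain ⟨φ, hφmono, hφ⟩ := Filter.extraction_of_frequently_atTop (hcon.and_eventually hlc)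
  -- enumerate roots
  have hq0 : ∀ k, q (φ k) ≠ 0 := by
    intro k h
    have h2 := (hφ k).2
    rw [h, coeff_zero, norm_zero] at h2
    linarith
  have henum : ∀ k, ∃ r : Fin d → ℂ, Multiset.map r Finset.univ.val = (q (φ k)).roots :=
    fun k => multiset_enum _ (by rw [card_roots_complex, hdq])
  choose r hr using henum
  -- roots bounded
  have hrb : ∀ k, r k ∈ closedBall (0 : Fin d → ℂ) M := by
    intro k
    rw [mem_closedBall, dist_zero_right, pi_norm_le_iff_of_nonneg (le_trans zero_le_one (le_max_left _ _))]
    intro i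
    have hmem : r k i ∈ (q (φ k)).roots := by
      rw [← hr k]; exact Multiset.mem_map_of_mem _ (Finset.mem_univ_val i)
    have hev : (q (φ k)).eval (r k i) = 0 := (mem_roots (hq0 k)).mp hmem
    refine root_bound (hdq (φ k)) ?_ (by linarith : (0:ℝ) < ‖Q.coeff d‖/2) ((hφ k).2) (hAb (φ k)) hev
    intro h
    have h2 := (hφ k).2
    rw [h, norm_zero] at h2
    linarith
  obtain ⟨Rl, _, ψ, hψmono, hψtend⟩ :=
    tendsto_subseq_of_bounded (isBounded_closedBall (x := (0 : Fin d → ℂ)) (r := M)) hrb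
  -- identify the limit
  have hsub : ∀ i, Tendsto (fun k => (q (φ (ψ k))).coeff i) atTop (nhds (Q.coeff i)) :=
    fun i => (hconv i).comp ((hφmono.comp hψmono).tendsto_atTop)
  have hGQ : Q = C (Q.coeff d) * ∏ i, (X - C (Rl i)) := by
    apply Polynomial.funext
    intro z
    have h1 : Tendsto (fun k => (q (φ (ψ k))).eval z) atTop (nhds (Q.eval z)) :=
      eval_tendsto (fun k => (hdq _).le) hdQ.le hsub tendsto_const_nhds
    have h2 : Tendsto (fun k => (q (φ (ψ k))).eval z) atTop
        (nhds ((C (Q.coeff d) * ∏ i, (X - C (Rl i))).eval z)) := by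
      have hev : ∀ k, (q (φ (ψ k))).eval z = (q (φ (ψ k))).coeff d * ∏ i, (z - r (ψ k) i) :=
        fun k => eval_eq_of_enum (hr (ψ k)) (hdq _) z
      simp only [hev, eval_mul, eval_C, eval_prod, eval_sub, eval_X]
      apply Tendsto.mul (hsub d)
      apply tendsto_finset_prod
      intro i _
      exact tendsto_const_nhds.sub ((tendsto_pi_nhds.mp hψtend) i)
    exact tendsto_nhds_unique h1 h2
  have hQroots : Multiset.map Rl Finset.univ.val = Q.roots := by
    rw [hGQ, roots_C_mul _ (by simpa [← hdQ, leadingCoeff_eq_zero] using hQ0)]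
    have : (∏ i, (X - C (Rl i))) = ((Multiset.map Rl Finset.univ.val).map
        (fun a => X - C a)).prod := by
      rw [Multiset.map_map, Finset.prod]; rfl
    rw [this, roots_multiset_prod_X_sub_C]
  -- eventual closeness
  have hclose : ∀ᶠ k in atTop, ∀ i, dist (r (ψ k) i) (Rl i) < ε := by
    rw [eventually_all]
    intro i
    have := (tendsto_pi_nhds.mp hψtend) i
    exact (this.eventually_mem (ball_mem_nhds _ hε)).mono fun k hk => mem_ball.mp hk
  obtain ⟨k, hk⟩ := hclose.exists
  exact (hφ (ψ k)).1 ⟨r (ψ k), Rl, hr (ψ k), hQroots, hk⟩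

lemma count_and_near {d : ℕ} {q : ℕ → ℂ[X]} {Q : ℂ[X]}
    (hdq : ∀ k, (q k).natDegree = d) (hdQ : Q.natDegree = d) (hQ0 : Q ≠ 0)
    (hconv : ∀ i, Tendsto (fun k => (q k).coeff i) atTop (nhds (Q.coeff i)))
    {x0 : ℂ} {ε : ℝ} (hε : 0 < ε)
    (hsep : ∀ y ∈ Q.roots, y ≠ x0 → 2*ε < dist y x0) :
    ∀ᶠ k in atTop,
      Multiset.card ((q k).roots.filter (fun z => dist z x0 < ε)) = Q.rootMultiplicity x0 ∧
      (∀ z ∈ (q k).roots, ∃ y ∈ Q.roots, dist z y < ε) := by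
  filter_upwards [roots_matching hdq hdQ hQ0 hconv hε] with k hk
  obtain ⟨r, R, hr, hR, hdist⟩ := hk
  have hRroot : ∀ i, R i ∈ Q.roots := fun i => by
    rw [← hR]; exact Multiset.mem_map_of_mem _ (Finset.mem_univ_val i)
  constructor
  · rw [← hr, ← Polynomial.count_roots, ← hR, Multiset.filter_map, Multiset.card_map,
      Multiset.count_map]
    congr 1
    apply Multiset.filter_congr
    intro i _
    simp only [Function.comp]
    constructor
    · intro h
      by_contra hne
      have h1 := hsep (R i) (hRroot i) (fun he => hne he.symm)
      have h2 := dist_triangle (R i) (r i) x0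
      have h3 := hdist i
      rw [dist_comm (R i) (r i)] at h2
      linarith
    · intro h
      have h3 := hdist i
      rw [← h] at h3
      exact h3
  · intro z hz
    rw [← hr] at hz
    obtain ⟨i, _, rfl⟩ := Multiset.mem_map.mp hz
    exact ⟨R i, hRroot i, hdist i⟩

lemma KS {q : ℂ[X]} {c' x0 : ℂ} {ε : ℝ} {m : ℕ} (hm : 3 ≤ m)
    (hS : Multiset.card ((q - C c').roots.filter (fun z => dist z x0 < ε)) = m)
    (hT : Multiset.card ((derivative q).roots.filter (fun z => dist z x0 < ε)) = m - 1)
    (hv : ∀ z, (derivative q).eval z = 0 → dist z x0 < ε → q.eval z = c') :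
    ∃ x, (derivative q).eval x = 0 ∧ (derivative (derivative q)).eval x = 0 := by
  by_contra hP
  push_neg at hP
  have hq'0 : derivative q ≠ 0 := by
    intro h
    rw [h, roots_zero, Multiset.filter_zero] at hT
    simp at hT
    omega
  have hqc0 : q - C c' ≠ 0 := by
    intro h
    rw [h, roots_zero, Multiset.filter_zero] at hS
    simp at hS
    omega
  set S := (q - C c').roots.filter (fun z => dist z x0 < ε) with hSdef
  set T := (derivative q).roots.filter (fun z => dist z x0 < ε) with hTdef
  have hTnodup : T.Nodup := by
    rw [Multiset.nodup_iff_count_le_one]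
    intro z
    by_contra hc
    push_neg at hc
    have h2 : 2 ≤ (derivative q).rootMultiplicity z := by
      rw [← Polynomial.count_roots]
      calc 2 ≤ Multiset.count z T := hc
        _ ≤ Multiset.count z (derivative q).roots :=
          Multiset.count_le_of_le _ (Multiset.filter_le _ _)
    have hz1 : (derivative q).eval z = 0 := by
      have := (rootMultiplicity_pos (x := z) hq'0).mp (by omega)
      exact this
    have hz2 : (derivative (derivative q)).eval z = 0 := by
      have := isRoot_iterate_derivative_of_lt_rootMultiplicity (p := derivative q) (t := z)
        (n := 1) (by omega)
      simpa using this
    exact hP z hz1 hz2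
  have hmem2 : ∀ z ∈ T, Multiset.count z S = 2 := by
    intro z hz
    obtain ⟨hzr, hzd⟩ := Multiset.mem_filter.mp hz
    have hz' : (derivative q).eval z = 0 := (mem_roots hq'0).mp hzr
    have hq : q.eval z = c' := hv z hz' hzd
    have hmult : (q - C c').rootMultiplicity z = 2 := by
      have hge : 1 < (q - C c').rootMultiplicity z := by
        apply lt_rootMultiplicity_of_isRoot_iterate_derivative hqc0
        intro mm hmm
        interval_cases mm
        · simp [IsRoot, hq]
        · simpa [IsRoot, derivative_sub] using hz'
      have hlt : ¬ 2 < (q - C c').rootMultiplicity z := by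
        intro h
        have h2 := isRoot_iterate_derivative_of_lt_rootMultiplicity (p := q - C c') (t := z)
          (n := 2) h
        apply hP z hz'
        have : derivative^[2] (q - C c') = derivative (derivative q) := by
          simp [Function.iterate_succ, derivative_sub]
        rw [this] at h2
        exact h2
      omega
    rw [hSdef, Multiset.count_filter, if_pos hzd, Polynomial.count_roots, hmult]
  -- counting
  have hTcard : T.toFinset.card = m - 1 := by
    rw [Multiset.toFinset_card_of_nodup hTnodup, hT]
  have hsub : T.toFinset ⊆ S.toFinset := by
    intro z hz
    rw [Multiset.mem_toFinset] at hz ⊢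
    rw [← Multiset.count_pos, hmem2 z hz]
    omega
  have hbound : 2 * (m - 1) ≤ m := by
    calc 2 * (m - 1) = ∑ z ∈ T.toFinset, 2 := by
          rw [Finset.sum_const, hTcard, smul_eq_mul, mul_comm]
      _ = ∑ z ∈ T.toFinset, Multiset.count z S := by
          apply Finset.sum_congr rfl
          intro z hz
          rw [hmem2 z (Multiset.mem_toFinset.mp hz)]
      _ ≤ ∑ z ∈ S.toFinset, Multiset.count z S := by
          apply Finset.sum_le_sum_of_subset_of_nonneg hsub
          intro z _ _
          exact Nat.zero_le _
      _ = Multiset.card S := Multiset.toFinset_sum_count_eq S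
      _ = m := hS
  omega

lemma eval_dist_le {N : ℕ} {q Q : ℂ[X]} (hq : q.natDegree ≤ N) (hQ : Q.natDegree ≤ N)
    {R : ℝ} {z : ℂ} (hz : ‖z‖ ≤ R) :
    dist (q.eval z) (Q.eval z) ≤ ∑ i ∈ Finset.range (N+1), ‖q.coeff i - Q.coeff i‖ * R^i := by
  have hR : 0 ≤ R := (norm_nonneg z).trans hz
  rw [dist_eq_norm, eval_eq_sum_range' (Nat.lt_succ_of_le hq), eval_eq_sum_range' (Nat.lt_succ_of_le hQ),
    ← Finset.sum_sub_distrib]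
  refine (norm_sum_le _ _).trans (Finset.sum_le_sum ?_)
  intro i _
  rw [← sub_mul, norm_mul, norm_pow]
  exact mul_le_mul_of_nonneg_left (pow_le_pow_left₀ (norm_nonneg z) hz i) (norm_nonneg _)

lemma finset_sep (Y : Finset ℂ) (x0 : ℂ) (h : ∀ y ∈ Y, y ≠ x0) :
    ∃ ε > 0, ∀ y ∈ Y, 2*ε < dist y x0 := by
  rcases Y.eq_empty_or_nonempty with he | hne
  · exact ⟨1, one_pos, by simp [he]⟩
  obtain ⟨y0, hy0, hmin⟩ := Y.exists_min_image (fun y => dist y x0) hne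
  have h1 : 0 < dist y0 x0 := dist_pos.mpr (h y0 hy0)
  refine ⟨dist y0 x0 / 3, by linarith, ?_⟩
  · intro y hy
    have := hmin y hy
    linarith

lemma root_limit {d : ℕ} {q : ℕ → ℂ[X]} {Q : ℂ[X]}
    (hdq : ∀ k, (q k).natDegree = d) (hdQ : Q.natDegree = d) (hQ0 : Q ≠ 0)
    (hconv : ∀ i, Tendsto (fun k => (q k).coeff i) atTop (nhds (Q.coeff i)))
    {z : ℕ → ℂ} (hz : ∀ k, (q k).eval (z k) = 0) :
    ∃ φ : ℕ → ℕ, StrictMono φ ∧ ∃ w : ℂ, Q.eval w = 0 ∧ Tendsto (z ∘ φ) atTop (nhds w) := by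
  have hL0 : (0:ℝ) < ‖Q.coeff d‖ := by
    rw [norm_pos_iff, ← hdQ]
    exact mt leadingCoeff_eq_zero.mp hQ0
  have hlc : ∀ᶠ k in atTop, ‖Q.coeff d‖/2 ≤ ‖(q k).coeff d‖ :=
    (hconv d).norm.eventually (eventually_ge_nhds (by linarith))
  obtain ⟨K, hK⟩ := hlc.exists_forall_of_atTop
  have hCi : ∀ i : ℕ, ∃ Ci : ℝ, 0 ≤ Ci ∧ ∀ k, ‖(q k).coeff i‖ ≤ Ci := by
    intro i
    obtain ⟨Ci, hCi⟩ := ((hconv i).norm.bddAbove_range)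
    exact ⟨max Ci 0, le_max_right _ _,
      fun k => le_max_of_le_left (hCi (Set.mem_range_self k))⟩
  choose Cf hCf0 hCf using hCi
  set A : ℝ := ∑ i ∈ Finset.range (d+1), Cf i with hA
  have hAnn : 0 ≤ A := Finset.sum_nonneg fun i _ => hCf0 i
  have hAb : ∀ k i, ‖(q k).coeff i‖ ≤ A := by
    intro k i
    rcases le_or_gt i d with hi | hi
    · calc ‖(q k).coeff i‖ ≤ Cf i := hCf i k
        _ ≤ A := Finset.single_le_sum (f := Cf) (fun j _ => hCf0 j)
            (Finset.mem_range.mpr (by omega))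
    · have : (q k).coeff i = 0 := coeff_eq_zero_of_natDegree_lt (by rw [hdq k]; omega)
      rw [this, norm_zero]; exact hAnn
  set M : ℝ := max 1 (d * A / (‖Q.coeff d‖/2)) with hM
  have hbdd : ∀ k, z (k + K) ∈ closedBall (0:ℂ) M := by
    intro k
    rw [mem_closedBall, dist_zero_right]
    refine root_bound (hdq (k+K)) ?_ (by linarith : (0:ℝ) < ‖Q.coeff d‖/2)
      (hK (k+K) (by omega)) (hAb (k+K)) (hz (k+K))
    intro h
    have h2 := hK (k+K) (by omega)
    rw [h, norm_zero] at h2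
    linarith
  obtain ⟨w, _, ψ, hψmono, hψtend⟩ :=
    tendsto_subseq_of_bounded (isBounded_closedBall (x := (0:ℂ)) (r := M)) hbdd
  have hmono : StrictMono (fun k => ψ k + K) := fun a b hab =>
    Nat.add_lt_add_right (hψmono hab) K
  refine ⟨fun k => ψ k + K, hmono, w, ?_, hψtend⟩
  · 
    have hsub : ∀ i, Tendsto (fun k => (q (ψ k + K)).coeff i) atTop (nhds (Q.coeff i)) :=
      fun i => (hconv i).comp hmono.tendsto_atTop
    have h1 : Tendsto (fun k => (q (ψ k + K)).eval (z (ψ k + K))) atTop (nhds (Q.eval w)) :=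
      eval_tendsto (fun k => (hdq _).le) hdQ.le hsub hψtend
    have h2 : (fun k => (q (ψ k + K)).eval (z (ψ k + K))) = fun _ => (0:ℂ) := by
      funext k; exact hz _
    rw [h2] at h1
    exact tendsto_nhds_unique h1 tendsto_const_nhds

lemma seqcore (n : ℕ) (hn : 1 ≤ n) (p : ℝ → ℂ[X])
    (hdeg : ∀ t ∈ Set.Icc (0:ℝ) 1, (p t).degree = n)
    (hcont : ∀ i : ℕ, ContinuousOn (fun t => (p t).coeff i) (Set.Icc (0:ℝ) 1))
    {t : ℕ → ℝ} (ht : ∀ k, t k ∈ Set.Icc (0:ℝ) 1) {t0 : ℝ} (ht0 : t0 ∈ Set.Icc (0:ℝ) 1)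
    (htt : Tendsto t atTop (nhds t0))
    {c' : ℕ → ℂ} {c : ℂ} (hc' : Tendsto c' atTop (nhds c))
    {δ0 : ℝ} (hδ0 : 0 < δ0)
    (Hu : ∀ᶠ k in atTop, ∀ z : ℂ, (derivative (p (t k))).eval z = 0 →
      dist ((p (t k)).eval z) c < δ0 → (p (t k)).eval z = c' k)
    {x0 : ℂ} {m : ℕ} (hm : 3 ≤ m) (hmult : (p t0 - C c).rootMultiplicity x0 = m) :
    ∀ᶠ k in atTop, ∃ x : ℂ, (derivative (p (t k))).eval x = 0 ∧
      (derivative (derivative (p (t k)))).eval x = 0 := by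
  have hnd : ∀ s ∈ Set.Icc (0:ℝ) 1, (p s).natDegree = n :=
    fun s hs => natDegree_eq_of_degree_eq_some (hdeg s hs)
  have hne : ∀ s ∈ Set.Icc (0:ℝ) 1, p s ≠ 0 := by
    intro s hs h
    have := hdeg s hs
    rw [h, degree_zero] at this
    exact absurd this.symm (by simp)
  have hlcne : ∀ s ∈ Set.Icc (0:ℝ) 1, (p s).coeff n ≠ 0 := by
    intro s hs
    have h1 : (p s).coeff n = (p s).leadingCoeff := by
      rw [leadingCoeff, hnd s hs]
    rw [h1]
    exact leadingCoeff_ne_zero.mpr (hne s hs)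
  have htt' : Tendsto t atTop (nhdsWithin t0 (Set.Icc (0:ℝ) 1)) :=
    tendsto_nhdsWithin_iff.mpr ⟨htt, Eventually.of_forall ht⟩
  have hcv : ∀ i, Tendsto (fun k => (p (t k)).coeff i) atTop (nhds ((p t0).coeff i)) :=
    fun i => (hcont i t0 ht0).tendsto.comp htt'
  -- the fiber family
  set F : ℕ → ℂ[X] := fun k => p (t k) - C (c' k) with hF
  set Fi : ℂ[X] := p t0 - C c with hFi
  have hFd : ∀ k, (F k).natDegree = n := fun k => by
    rw [hF]; simp only [natDegree_sub_C]; exact hnd _ (ht k)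
  have hFid : Fi.natDegree = n := by
    rw [hFi, natDegree_sub_C]; exact hnd _ ht0
  have hFicoeff : Fi.coeff n = (p t0).coeff n := by
    rw [hFi, coeff_sub, coeff_C, if_neg (by omega), sub_zero]
  have hFi0 : Fi ≠ 0 := fun h => by
    rw [h] at hFicoeff
    exact hlcne t0 ht0 (by rw [← hFicoeff, coeff_zero])
  have hFconv : ∀ i, Tendsto (fun k => (F k).coeff i) atTop (nhds (Fi.coeff i)) := by
    intro i
    simp only [hF, hFi, coeff_sub, coeff_C]
    rcases eq_or_ne i 0 with h | h
    · subst h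
      simp only [if_pos]
      exact (hcv 0).sub hc'
    · simp only [if_neg h, sub_zero]
      exact hcv i
  -- the derivative family
  set D : ℕ → ℂ[X] := fun k => derivative (p (t k)) with hD
  set Di : ℂ[X] := derivative (p t0) with hDi
  have hDcoeffs : ∀ s ∈ Set.Icc (0:ℝ) 1, (derivative (p s)).coeff (n-1) ≠ 0 := by
    intro s hs
    rw [coeff_derivative]
    have hnn : n - 1 + 1 = n := by omega
    rw [hnn]
    exact mul_ne_zero (hlcne s hs) (Nat.cast_add_one_ne_zero (n-1))
  have hDd : ∀ s ∈ Set.Icc (0:ℝ) 1, (derivative (p s)).natDegree = n - 1 := by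
    intro s hs
    refine le_antisymm ?_ (le_natDegree_of_ne_zero (hDcoeffs s hs))
    calc (derivative (p s)).natDegree ≤ (p s).natDegree - 1 := natDegree_derivative_le _
      _ = n - 1 := by rw [hnd s hs]
  have hDi0 : Di ≠ 0 := fun h => hDcoeffs t0 ht0 (by rw [hDi] at h; rw [h, coeff_zero])
  have hDconv : ∀ i, Tendsto (fun k => (D k).coeff i) atTop (nhds (Di.coeff i)) := by
    intro i
    simp only [hD, hDi, coeff_derivative]
    exact (hcv (i+1)).mul tendsto_const_nhds
  -- root multiplicity facts
  have hm0 : 0 < Fi.rootMultiplicity x0 := by rw [hmult]; omega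
  have hroot : Fi.IsRoot x0 := (rootMultiplicity_pos hFi0).mp hm0
  have hvalc : (p t0).eval x0 = c := by
    have := hroot
    rw [hFi, IsRoot, eval_sub, eval_C, sub_eq_zero] at this
    exact this
  have hmultD : Di.rootMultiplicity x0 = m - 1 := by
    have h1 := derivative_rootMultiplicity_of_root hroot
    rw [hFi, derivative_sub, derivative_C, sub_zero, ← hDi] at h1
    rw [h1, hmult]
  -- choice of ε
  obtain ⟨ε1, hε1, hsep1⟩ := finset_sep ((Fi.roots.toFinset ∪ Di.roots.toFinset).erase x0) x0
    (fun y hy => (Finset.mem_erase.mp hy).1)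
  have hcontp : ContinuousAt (fun z : ℂ => (p t0).eval z) x0 := (Polynomial.continuous _).continuousAt
  obtain ⟨ε2, hε2, hball⟩ := Metric.continuousAt_iff.mp hcontp (δ0/2) (by linarith)
  set ε : ℝ := min ε1 ε2 with hε
  have hεpos : 0 < ε := lt_min hε1 hε2
  have hsepF : ∀ y ∈ Fi.roots, y ≠ x0 → 2*ε < dist y x0 := by
    intro y hy hne'
    have := hsep1 y (Finset.mem_erase.mpr ⟨hne', Finset.mem_union_left _ (Multiset.mem_toFinset.mpr hy)⟩)
    have : 2*ε ≤ 2*ε1 := by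
      have := min_le_left ε1 ε2; linarith
    linarith [hsep1 y (Finset.mem_erase.mpr ⟨hne', Finset.mem_union_left _ (Multiset.mem_toFinset.mpr hy)⟩)]
  have hsepD : ∀ y ∈ Di.roots, y ≠ x0 → 2*ε < dist y x0 := by
    intro y hy hne'
    have h2 : 2*ε ≤ 2*ε1 := by have := min_le_left ε1 ε2; linarith
    linarith [hsep1 y (Finset.mem_erase.mpr ⟨hne', Finset.mem_union_right _ (Multiset.mem_toFinset.mpr hy)⟩)]
  -- counting events
  have E1 := count_and_near hFd hFid hFi0 hFconv hεpos hsepF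
  have E2 := count_and_near (fun k => hDd _ (ht k)) (hDd t0 ht0) hDi0 hDconv hεpos hsepD
  -- uniform eval closeness event
  set R : ℝ := ‖x0‖ + ε with hR
  set B : ℕ → ℝ := fun k => ∑ i ∈ Finset.range (n+1), ‖(p (t k)).coeff i - (p t0).coeff i‖ * R^i with hB
  have hBtend : Tendsto B atTop (nhds 0) := by
    have : (0:ℝ) = ∑ i ∈ Finset.range (n+1), (0:ℝ) := by simp
    rw [this]
    apply tendsto_finset_sum
    intro i _
    have h1 : Tendsto (fun k => (p (t k)).coeff i - (p t0).coeff i) atTop (nhds 0) := by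
      have := (hcv i).sub (tendsto_const_nhds (x := (p t0).coeff i))
      simpa using this
    have := (h1.norm.mul_const (R^i))
    simpa using this
  have EB : ∀ᶠ k in atTop, B k < δ0/2 :=
    hBtend.eventually (eventually_lt_nhds (by linarith))
  have V : ∀ᶠ k in atTop, ∀ z : ℂ, (derivative (p (t k))).eval z = 0 →
      dist z x0 < ε → (p (t k)).eval z = c' k := by
    filter_upwards [Hu, EB] with k hu hb
    intro z hz1 hz2
    have hzR : ‖z‖ ≤ R := by
      have h1 := norm_sub_norm_le z x0
      rw [← dist_eq_norm] at h1
      have : dist z x0 ≤ ε := hz2.le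
      rw [hR]
      linarith
    have hd1 : dist ((p (t k)).eval z) ((p t0).eval z) ≤ B k :=
      eval_dist_le (by rw [hnd _ (ht k)] : (p (t k)).natDegree ≤ n)
        (by rw [hnd _ ht0] : (p t0).natDegree ≤ n) hzR
    have hd2 : dist ((p t0).eval z) c < δ0/2 := by
      have := hball (show dist z x0 < ε2 from lt_of_lt_of_le hz2 (min_le_right _ _))
      rw [hvalc] at this
      exact this
    have : dist ((p (t k)).eval z) c < δ0 := by
      calc dist ((p (t k)).eval z) c ≤ dist ((p (t k)).eval z) ((p t0).eval z)
            + dist ((p t0).eval z) c := dist_triangle _ _ _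
        _ < δ0/2 + δ0/2 := by linarith
        _ = δ0 := by ring
    exact hu z hz1 this
  filter_upwards [E1, E2, V] with k h1 h2 h3
  refine KS hm ?_ ?_ h3
  · rw [← hmult]; exact h1.1
  · rw [show m - 1 = Di.rootMultiplicity x0 from hmultD.symm]; exact h2.1

lemma roots_bounded {d : ℕ} {q : ℕ → ℂ[X]} {Q : ℂ[X]}
    (hdq : ∀ k, (q k).natDegree = d) (hdQ : Q.natDegree = d) (hQ0 : Q ≠ 0)
    (hconv : ∀ i, Tendsto (fun k => (q k).coeff i) atTop (nhds (Q.coeff i))) :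
    ∃ K : ℕ, ∃ M : ℝ, 0 < M ∧ ∀ k, K ≤ k → ∀ z : ℂ, (q k).eval z = 0 → ‖z‖ ≤ M := by
  have hL0 : (0:ℝ) < ‖Q.coeff d‖ := by
    rw [norm_pos_iff, ← hdQ]
    exact mt leadingCoeff_eq_zero.mp hQ0
  have hlc : ∀ᶠ k in atTop, ‖Q.coeff d‖/2 ≤ ‖(q k).coeff d‖ :=
    (hconv d).norm.eventually (eventually_ge_nhds (by linarith))
  obtain ⟨K, hK⟩ := hlc.exists_forall_of_atTop
  have hCi : ∀ i : ℕ, ∃ Ci : ℝ, 0 ≤ Ci ∧ ∀ k, ‖(q k).coeff i‖ ≤ Ci := by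
    intro i
    obtain ⟨Ci, hCi⟩ := ((hconv i).norm.bddAbove_range)
    exact ⟨max Ci 0, le_max_right _ _,
      fun k => le_max_of_le_left (hCi (Set.mem_range_self k))⟩
  choose Cf hCf0 hCf using hCi
  set A : ℝ := ∑ i ∈ Finset.range (d+1), Cf i with hA
  have hAnn : 0 ≤ A := Finset.sum_nonneg fun i _ => hCf0 i
  have hAb : ∀ k i, ‖(q k).coeff i‖ ≤ A := by
    intro k i
    rcases le_or_gt i d with hi | hi
    · calc ‖(q k).coeff i‖ ≤ Cf i := hCf i k
        _ ≤ A := Finset.single_le_sum (f := Cf) (fun j _ => hCf0 j)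
            (Finset.mem_range.mpr (by omega))
    · have : (q k).coeff i = 0 := coeff_eq_zero_of_natDegree_lt (by rw [hdq k]; omega)
      rw [this, norm_zero]; exact hAnn
  refine ⟨K, max 1 (d * A / (‖Q.coeff d‖/2)), lt_of_lt_of_le one_pos (le_max_left _ _), ?_⟩
  intro k hk z hz
  refine root_bound (hdq k) ?_ (by linarith : (0:ℝ) < ‖Q.coeff d‖/2) (hK k hk) (hAb k) hz
  intro h
  have h2 := hK k hk
  rw [h, norm_zero] at h2
  linarith


lemma mem_criticalValues {q : ℂ[X]} {γ : ℂ} :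
    γ ∈ criticalValues q ↔ ∃ z : ℂ, (derivative q).eval z = 0 ∧ q.eval z = γ := by
  unfold criticalValues
  constructor
  · rintro ⟨z, hz, rfl⟩
    exact ⟨z, hz, rfl⟩
  · rintro ⟨z, hz, h⟩
    exact ⟨z, hz, h⟩

lemma cvs (n : ℕ) (hn : 1 ≤ n) (p : ℝ → ℂ[X])
    (hdeg : ∀ t ∈ Set.Icc (0:ℝ) 1, (p t).degree = n)
    (hcont : ∀ i : ℕ, ContinuousOn (fun t => (p t).coeff i) (Set.Icc (0:ℝ) 1))
    {t : ℕ → ℝ} (ht : ∀ k, t k ∈ Set.Icc (0:ℝ) 1) {t0 : ℝ} (ht0 : t0 ∈ Set.Icc (0:ℝ) 1)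
    (htt : Tendsto t atTop (nhds t0))
    (h3 : ∀ k, (criticalValues (p (t k))).ncard = 3) :
    ∃ φ : ℕ → ℕ, StrictMono φ ∧ ∃ γ : Fin 3 → ℕ → ℂ, ∃ g : Fin 3 → ℂ,
      (∀ k, criticalValues (p (t (φ k))) = {γ 0 k, γ 1 k, γ 2 k}) ∧
      (∀ i, Tendsto (γ i) atTop (nhds (g i))) ∧
      (∀ i, g i ∈ criticalValues (p t0)) ∧
      criticalValues (p t0) ⊆ {g 0, g 1, g 2} := by
  -- basic degree facts
  have hnd : ∀ s ∈ Set.Icc (0:ℝ) 1, (p s).natDegree = n :=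
    fun s hs => natDegree_eq_of_degree_eq_some (hdeg s hs)
  have hne : ∀ s ∈ Set.Icc (0:ℝ) 1, p s ≠ 0 := by
    intro s hs h
    have := hdeg s hs
    rw [h, degree_zero] at this
    exact absurd this.symm (by simp)
  have hlcne : ∀ s ∈ Set.Icc (0:ℝ) 1, (p s).coeff n ≠ 0 := by
    intro s hs
    have h1 : (p s).coeff n = (p s).leadingCoeff := by
      rw [leadingCoeff, hnd s hs]
    rw [h1]
    exact leadingCoeff_ne_zero.mpr (hne s hs)
  have htt' : Tendsto t atTop (nhdsWithin t0 (Set.Icc (0:ℝ) 1)) :=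
    tendsto_nhdsWithin_iff.mpr ⟨htt, Eventually.of_forall ht⟩
  have hcv : ∀ i, Tendsto (fun k => (p (t k)).coeff i) atTop (nhds ((p t0).coeff i)) :=
    fun i => (hcont i t0 ht0).tendsto.comp htt'
  have hDcoeffs : ∀ s ∈ Set.Icc (0:ℝ) 1, (derivative (p s)).coeff (n-1) ≠ 0 := by
    intro s hs
    rw [coeff_derivative]
    have hnn : n - 1 + 1 = n := by omega
    rw [hnn]
    exact mul_ne_zero (hlcne s hs) (Nat.cast_add_one_ne_zero (n-1))
  have hDd : ∀ s ∈ Set.Icc (0:ℝ) 1, (derivative (p s)).natDegree = n - 1 := by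
    intro s hs
    refine le_antisymm ?_ (le_natDegree_of_ne_zero (hDcoeffs s hs))
    calc (derivative (p s)).natDegree ≤ (p s).natDegree - 1 := natDegree_derivative_le _
      _ = n - 1 := by rw [hnd s hs]
  have hDi0 : derivative (p t0) ≠ 0 :=
    fun h => hDcoeffs t0 ht0 (by rw [h, coeff_zero])
  have hDconv : ∀ i, Tendsto (fun k => (derivative (p (t k))).coeff i) atTop
      (nhds ((derivative (p t0)).coeff i)) := by
    intro i
    simp only [coeff_derivative]
    exact (hcv (i+1)).mul tendsto_const_nhds
  -- three critical values with critical points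
  have hex : ∀ k, ∃ v : Fin 3 → ℂ, ∃ z : Fin 3 → ℂ,
      criticalValues (p (t k)) = {v 0, v 1, v 2} ∧
      ∀ i, (derivative (p (t k))).eval (z i) = 0 ∧ (p (t k)).eval (z i) = v i := by
    intro k
    obtain ⟨a, b, c, hab, hac, hbc, hset⟩ := Set.ncard_eq_three.mp (h3 k)
    have hmem : ∀ w ∈ criticalValues (p (t k)), ∃ z : ℂ,
        (derivative (p (t k))).eval z = 0 ∧ (p (t k)).eval z = w :=
      fun w hw => mem_criticalValues.mp hw
    obtain ⟨za, hza⟩ := hmem a (by rw [hset]; simp)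
    obtain ⟨zb, hzb⟩ := hmem b (by rw [hset]; simp)
    obtain ⟨zc, hzc⟩ := hmem c (by rw [hset]; simp)
    refine ⟨![a, b, c], ![za, zb, zc], by simpa using hset, ?_⟩
    intro i
    fin_cases i
    · simpa using hza
    · simpa using hzb
    · simpa using hzc
  choose v z hvset hvz using hex
  -- bound on critical points
  obtain ⟨K, M, hM, hKM⟩ := roots_bounded (fun k => hDd _ (ht k)) (hDd t0 ht0) hDi0 hDconv
  have hZbdd : ∀ k, (fun i => z (k+K) i) ∈ closedBall (0 : Fin 3 → ℂ) M := by
    intro k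
    rw [mem_closedBall, dist_zero_right, pi_norm_le_iff_of_nonneg hM.le]
    intro i
    exact hKM (k+K) (by omega) _ (hvz (k+K) i).1
  obtain ⟨Z, _, ψ, hψmono, hψtend⟩ :=
    tendsto_subseq_of_bounded (isBounded_closedBall (x := (0 : Fin 3 → ℂ)) (r := M)) hZbdd
  set φ : ℕ → ℕ := fun k => ψ k + K with hφ
  have hφmono : StrictMono φ := fun a b hab => Nat.add_lt_add_right (hψmono hab) K
  have hφt : Tendsto φ atTop atTop := hφmono.tendsto_atTop
  have hcvφ : ∀ i, Tendsto (fun k => (p (t (φ k))).coeff i) atTop (nhds ((p t0).coeff i)) :=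
    fun i => (hcv i).comp hφt
  have hDconvφ : ∀ i, Tendsto (fun k => (derivative (p (t (φ k)))).coeff i) atTop
      (nhds ((derivative (p t0)).coeff i)) := fun i => (hDconv i).comp hφt
  have hZt : ∀ i, Tendsto (fun k => z (φ k) i) atTop (nhds (Z i)) := by
    intro i
    exact (tendsto_pi_nhds.mp hψtend) i
  set g : Fin 3 → ℂ := fun i => (p t0).eval (Z i) with hg
  have hgcrit : ∀ i, (derivative (p t0)).eval (Z i) = 0 := by
    intro i
    have h1 : Tendsto (fun k => (derivative (p (t (φ k)))).eval (z (φ k) i)) atTop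
        (nhds ((derivative (p t0)).eval (Z i))) :=
      eval_tendsto (fun k => (hDd _ (ht (φ k))).le) (hDd t0 ht0).le hDconvφ (hZt i)
    have h2 : (fun k => (derivative (p (t (φ k)))).eval (z (φ k) i)) = fun _ => (0:ℂ) := by
      funext k; exact (hvz (φ k) i).1
    rw [h2] at h1
    exact tendsto_nhds_unique h1 tendsto_const_nhds
  have hγt : ∀ i, Tendsto (fun k => v (φ k) i) atTop (nhds (g i)) := by
    intro i
    have h1 : Tendsto (fun k => (p (t (φ k))).eval (z (φ k) i)) atTop
        (nhds ((p t0).eval (Z i))) :=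
      eval_tendsto (fun k => (hnd _ (ht (φ k))).le) (hnd t0 ht0).le hcvφ (hZt i)
    have h2 : (fun k => (p (t (φ k))).eval (z (φ k) i)) = fun k => v (φ k) i := by
      funext k; exact (hvz (φ k) i).2
    rw [h2] at h1
    exact h1
  refine ⟨φ, hφmono, fun i k => v (φ k) i, g, fun k => hvset (φ k), hγt,
    fun i => mem_criticalValues.mpr ⟨Z i, hgcrit i, rfl⟩, ?_⟩
  -- every critical value of p t0 is a limit
  intro γ0 hγ0
  obtain ⟨x, hx1, hx2⟩ := mem_criticalValues.mp hγ0
  by_contra hno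
  have hδ : ∃ δ > 0, ∀ i : Fin 3, δ ≤ dist γ0 (g i) := by
    have hpos : ∀ i : Fin 3, 0 < dist γ0 (g i) := by
      intro i
      rw [dist_pos]
      intro h
      apply hno
      rw [h]
      fin_cases i <;> simp
    refine ⟨min (dist γ0 (g 0)) (min (dist γ0 (g 1)) (dist γ0 (g 2))),
      lt_min (hpos 0) (lt_min (hpos 1) (hpos 2)), ?_⟩
    intro i
    fin_cases i
    · exact min_le_left _ _
    · exact (min_le_right _ _).trans (min_le_left _ _)
    · exact (min_le_right _ _).trans (min_le_right _ _)
  obtain ⟨δ, hδpos, hδle⟩ := hδ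
  -- choose ε' by continuity at x
  have hcontp : ContinuousAt (fun w : ℂ => (p t0).eval w) x := (Polynomial.continuous _).continuousAt
  obtain ⟨ε', hε'pos, hball⟩ := Metric.continuousAt_iff.mp hcontp (δ/3) (by linarith)
  -- eventually exists root of D near x
  have hxroot : x ∈ (derivative (p t0)).roots := by
    rw [mem_roots hDi0]
    exact hx1
  have EM := roots_matching (fun k => hDd _ (ht (φ k))) (hDd t0 ht0) hDi0 hDconvφ hε'pos
  -- uniform eval closeness on ball around x
  set R : ℝ := ‖x‖ + ε' with hRdef
  set B : ℕ → ℝ := fun k => ∑ i ∈ Finset.range (n+1),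
    ‖(p (t (φ k))).coeff i - (p t0).coeff i‖ * R^i with hB
  have hBtend : Tendsto B atTop (nhds 0) := by
    have h0 : (0:ℝ) = ∑ i ∈ Finset.range (n+1), (0:ℝ) := by simp
    rw [h0]
    apply tendsto_finset_sum
    intro i _
    have h1 : Tendsto (fun k => (p (t (φ k))).coeff i - (p t0).coeff i) atTop (nhds 0) := by
      have := (hcvφ i).sub (tendsto_const_nhds (x := (p t0).coeff i))
      simpa using this
    have := h1.norm.mul_const (R^i)
    simpa using this
  have EB : ∀ᶠ k in atTop, B k < δ/3 :=
    hBtend.eventually (eventually_lt_nhds (by linarith))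
  have EG : ∀ᶠ k in atTop, ∀ i : Fin 3, dist (v (φ k) i) (g i) < δ/3 := by
    rw [eventually_all]
    intro i
    have := (hγt i).eventually_mem (ball_mem_nhds (g i) (by linarith : (0:ℝ) < δ/3))
    exact this.mono fun k hk => mem_ball.mp hk
  obtain ⟨k, hmatch, hBk, hG⟩ := (EM.and (EB.and EG)).exists
  obtain ⟨r, Rf, hr, hRf, hdist⟩ := hmatch
  have hxmem : x ∈ Multiset.map Rf Finset.univ.val := by rw [hRf]; exact hxroot
  obtain ⟨i0, _, hi0⟩ := Multiset.mem_map.mp hxmem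
  have hDk0 : derivative (p (t (φ k))) ≠ 0 :=
    fun h => hDcoeffs _ (ht (φ k)) (by rw [h, coeff_zero])
  have hri0 : (derivative (p (t (φ k)))).eval (r i0) = 0 := by
    have hmem' : r i0 ∈ (derivative (p (t (φ k)))).roots := by
      rw [← hr]; exact Multiset.mem_map_of_mem _ (Finset.mem_univ_val i0)
    exact (mem_roots hDk0).mp hmem'
  have hdx : dist (r i0) x < ε' := by rw [← hi0]; exact hdist i0
  have hvmem : (p (t (φ k))).eval (r i0) ∈ criticalValues (p (t (φ k))) :=
    mem_criticalValues.mpr ⟨r i0, hri0, rfl⟩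
  rw [hvset (φ k)] at hvmem
  have hnr : ‖r i0‖ ≤ R := by
    have h1 := norm_sub_norm_le (r i0) x
    rw [← dist_eq_norm] at h1
    rw [hRdef]
    linarith
  have h1 : dist ((p (t (φ k))).eval (r i0)) ((p t0).eval (r i0)) ≤ B k :=
    eval_dist_le (by rw [hnd _ (ht (φ k))] : (p (t (φ k))).natDegree ≤ n)
      (by rw [hnd t0 ht0] : (p t0).natDegree ≤ n) hnr
  have h2 : dist ((p t0).eval (r i0)) γ0 < δ/3 := by
    have := hball hdx
    rw [hx2] at this
    exact this
  have hsmall : dist ((p (t (φ k))).eval (r i0)) γ0 < 2*δ/3 := by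
    calc dist ((p (t (φ k))).eval (r i0)) γ0
        ≤ dist ((p (t (φ k))).eval (r i0)) ((p t0).eval (r i0))
          + dist ((p t0).eval (r i0)) γ0 := dist_triangle _ _ _
      _ < δ/3 + δ/3 := by linarith
      _ = 2*δ/3 := by ring
  have hfar : ∀ i : Fin 3, (p (t (φ k))).eval (r i0) = v (φ k) i → False := by
    intro i hi
    have ha := hδle i
    have hb := hG i
    have hc : dist γ0 (g i) ≤ dist γ0 (v (φ k) i) + dist (v (φ k) i) (g i) :=
      dist_triangle _ _ _
    have hd : dist γ0 (v (φ k) i) < 2*δ/3 := by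
      rw [dist_comm, ← hi]; exact hsmall
    linarith
  simp only [Set.mem_insert_iff, Set.mem_singleton_iff] at hvmem
  rcases hvmem with h | h | h
  · exact hfar 0 h
  · exact hfar 1 h
  · exact hfar 2 h

lemma seq_of_frequently {s : Set ℝ} {t0 : ℝ} {Q : ℝ → Prop}
    (h : ∃ᶠ u in nhdsWithin t0 s, Q u) :
    ∃ t : ℕ → ℝ, (∀ k, t k ∈ s ∧ Q (t k)) ∧ Tendsto t atTop (nhds t0) := by
  have hex : ∀ k : ℕ, ∃ u, (u ∈ ball t0 (1/(k+1)) ∧ u ∈ s) ∧ Q u := by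
    intro k
    have hmem : (ball t0 (1/(k+1)) ∩ s) ∈ nhdsWithin t0 s :=
      Filter.inter_mem (mem_nhdsWithin_of_mem_nhds (ball_mem_nhds t0 (by positivity)))
        self_mem_nhdsWithin
    obtain ⟨u, hu1, hu2⟩ := (h.and_eventually (eventually_mem_set.mpr hmem)).exists
    exact ⟨u, ⟨hu2.1, hu2.2⟩, hu1⟩
  choose t htt hQ using hex
  refine ⟨t, fun k => ⟨(htt k).2, hQ k⟩, ?_⟩
  rw [Metric.tendsto_atTop]
  intro ε hε
  obtain ⟨N, hN⟩ := exists_nat_one_div_lt hε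
  refine ⟨N, fun k hk => ?_⟩
  have h1 : dist (t k) t0 < 1/(k+1) := mem_ball.mp (htt k).1
  have h2 : (1:ℝ)/(k+1) ≤ 1/(N+1) := by
    apply div_le_div_of_nonneg_left one_pos.le (by positivity)
    have := (Nat.cast_le (α := ℝ)).mpr hk
    push_cast
    linarith
  linarith

lemma pairwise_of_ncard_three {x y z : ℂ} (h : ({x, y, z} : Set ℂ).ncard = 3) :
    x ≠ y ∧ x ≠ z ∧ y ≠ z := by
  refine ⟨?_, ?_, ?_⟩ <;> intro he
  · subst he
    rw [Set.insert_idem] at h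
    have h2 := Set.ncard_insert_le x ({z} : Set ℂ)
    rw [Set.ncard_singleton] at h2
    omega
  · subst he
    rw [Set.insert_comm, Set.pair_eq_singleton] at h
    have h2 := Set.ncard_insert_le y ({x} : Set ℂ)
    rw [Set.ncard_singleton] at h2
    omega
  · subst he
    rw [Set.pair_eq_singleton] at h
    have h2 := Set.ncard_insert_le x ({y} : Set ℂ)
    rw [Set.ncard_singleton] at h2
    omega

lemma Hu_of (p : ℝ → ℂ[X]) (t : ℕ → ℝ) (γ : Fin 3 → ℕ → ℂ) (g : Fin 3 → ℂ)
    (j : Fin 3) (c : ℂ) {δ0 : ℝ} (hδ0 : 0 < δ0)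
    (hset : ∀ k, criticalValues (p (t k)) = {γ 0 k, γ 1 k, γ 2 k})
    (hγt : ∀ i, Tendsto (γ i) atTop (nhds (g i)))
    (hgj : g j = c) (hothers : ∀ i, i ≠ j → 2*δ0 ≤ dist c (g i)) :
    ∀ᶠ k in atTop, ∀ z : ℂ, (derivative (p (t k))).eval z = 0 →
      dist ((p (t k)).eval z) c < δ0 → (p (t k)).eval z = γ j k := by
  have EG : ∀ᶠ k in atTop, ∀ i : Fin 3, dist (γ i k) (g i) < δ0/2 := by
    rw [eventually_all]
    intro i
    have := (hγt i).eventually_mem (ball_mem_nhds (g i) (by linarith : (0:ℝ) < δ0/2))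
    exact this.mono fun k hk => mem_ball.mp hk
  filter_upwards [EG] with k hG
  intro z hz hd
  have hval : (p (t k)).eval z ∈ criticalValues (p (t k)) :=
    mem_criticalValues.mpr ⟨z, hz, rfl⟩
  rw [hset k] at hval
  simp only [Set.mem_insert_iff, Set.mem_singleton_iff] at hval
  have hvali : ∃ i : Fin 3, (p (t k)).eval z = γ i k := by
    rcases hval with h | h | h
    exacts [⟨0, h⟩, ⟨1, h⟩, ⟨2, h⟩]
  obtain ⟨i, hi⟩ := hvali
  by_cases hij : i = j
  · rw [← hij]; exact hi
  · exfalso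
    have h1 := hothers i hij
    have h2 := hG i
    have h3 : dist c (g i) ≤ dist c ((p (t k)).eval z) + dist ((p (t k)).eval z) (g i) :=
      dist_triangle _ _ _
    have h5 : dist ((p (t k)).eval z) (g i) < δ0/2 := by rw [hi]; exact h2
    rw [dist_comm] at hd
    linarith

lemma evA (n : ℕ) (hn : 1 ≤ n) (p : ℝ → ℂ[X])
    (hdeg : ∀ t ∈ Set.Icc (0:ℝ) 1, (p t).degree = n)
    (hcont : ∀ i : ℕ, ContinuousOn (fun t => (p t).coeff i) (Set.Icc (0:ℝ) 1))
    (hmid : ∀ t ∈ Set.Ioo (0:ℝ) 1, (criticalValues (p t)).ncard = 3)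
    (α β : ℂ) (hαβ : α ≠ β) (hcv0 : criticalValues (p 0) = {α, β})
    (hα : ∃ x : ℂ, 3 ≤ (p 0 - C α).rootMultiplicity x)
    (hβ : ∃ x : ℂ, 3 ≤ (p 0 - C β).rootMultiplicity x) :
    ∀ᶠ u in nhdsWithin 0 (Set.Ioo (0:ℝ) 1), ∃ x : ℂ,
      (derivative (p u)).eval x = 0 ∧ (derivative (derivative (p u))).eval x = 0 := by
  by_contra hcon
  rw [Filter.not_eventually] at hcon
  obtain ⟨t, htk, htt⟩ := seq_of_frequently hcon
  have htIoo : ∀ k, t k ∈ Set.Ioo (0:ℝ) 1 := fun k => (htk k).1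
  have htIcc : ∀ k, t k ∈ Set.Icc (0:ℝ) 1 := fun k => Set.Ioo_subset_Icc_self (htIoo k)
  have ht0 : (0:ℝ) ∈ Set.Icc (0:ℝ) 1 := Set.left_mem_Icc.mpr zero_le_one
  obtain ⟨φ, hφmono, γ, g, hset, hγt, hgmem, hsub⟩ :=
    cvs n hn p hdeg hcont htIcc ht0 htt (fun k => hmid _ (htIoo k))
  -- each g i is α or β
  have hval : ∀ i, g i = α ∨ g i = β := by
    intro i
    have := hgmem i
    rw [hcv0] at this
    simpa using this
  have hgα : ∃ i, g i = α := by
    have : α ∈ ({g 0, g 1, g 2} : Set ℂ) := hsub (by rw [hcv0]; simp)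
    simp only [Set.mem_insert_iff, Set.mem_singleton_iff] at this
    rcases this with h | h | h
    exacts [⟨0, h.symm⟩, ⟨1, h.symm⟩, ⟨2, h.symm⟩]
  have hgβ : ∃ i, g i = β := by
    have : β ∈ ({g 0, g 1, g 2} : Set ℂ) := hsub (by rw [hcv0]; simp)
    simp only [Set.mem_insert_iff, Set.mem_singleton_iff] at this
    rcases this with h | h | h
    exacts [⟨0, h.symm⟩, ⟨1, h.symm⟩, ⟨2, h.symm⟩]
  have key : ∃ j : Fin 3, (g j = α ∧ ∀ i, i ≠ j → g i = β) ∨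
      (g j = β ∧ ∀ i, i ≠ j → g i = α) := by
    rcases hval 0 with h0 | h0 <;> rcases hval 1 with h1 | h1 <;> rcases hval 2 with h2 | h2
    · exfalso
      obtain ⟨i, hi⟩ := hgβ
      fin_cases i
      · exact hαβ (h0.symm.trans hi)
      · exact hαβ (h1.symm.trans hi)
      · exact hαβ (h2.symm.trans hi)
    · refine ⟨2, Or.inr ⟨h2, ?_⟩⟩
      intro i hi
      fin_cases i
      · exact h0
      · exact h1
      · simp at hi
    · refine ⟨1, Or.inr ⟨h1, ?_⟩⟩
      intro i hi
      fin_cases i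
      · exact h0
      · simp at hi
      · exact h2
    · refine ⟨0, Or.inl ⟨h0, ?_⟩⟩
      intro i hi
      fin_cases i
      · simp at hi
      · exact h1
      · exact h2
    · refine ⟨0, Or.inr ⟨h0, ?_⟩⟩
      intro i hi
      fin_cases i
      · simp at hi
      · exact h1
      · exact h2
    · refine ⟨1, Or.inl ⟨h1, ?_⟩⟩
      intro i hi
      fin_cases i
      · exact h0
      · simp at hi
      · exact h2
    · refine ⟨2, Or.inl ⟨h2, ?_⟩⟩
      intro i hi
      fin_cases i
      · exact h0
      · exact h1
      · simp at hi
    · exfalso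
      obtain ⟨i, hi⟩ := hgα
      fin_cases i
      · exact hαβ (hi.symm.trans h0)
      · exact hαβ (hi.symm.trans h1)
      · exact hαβ (hi.symm.trans h2)
  obtain ⟨j, hj⟩ := key
  -- a uniform finishing move
  have main : ∀ (c co : ℂ), c ≠ co → (∃ x : ℂ, 3 ≤ (p 0 - C c).rootMultiplicity x) →
      g j = c → (∀ i, i ≠ j → g i = co) → False := by
    intro c co hcco hx hgj hothers
    obtain ⟨x0, hx0⟩ := hx
    set δ0 : ℝ := dist c co / 2 with hδ0def
    have hδ0 : 0 < δ0 := by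
      rw [hδ0def]
      have := dist_pos.mpr hcco
      linarith
    have Hu := Hu_of p (t ∘ φ) γ g j c hδ0 hset hγt hgj
      (fun i hi => by rw [hothers i hi, hδ0def]; linarith)
    have hc' : Tendsto (γ j) atTop (nhds c) := hgj ▸ hγt j
    have hcore := seqcore n hn p hdeg hcont (fun k => htIcc (φ k)) ht0
      (htt.comp hφmono.tendsto_atTop) hc' hδ0 Hu hx0 rfl
    obtain ⟨k, hk⟩ := hcore.exists
    exact (htk (φ k)).2 hk
  rcases hj with ⟨hjc, hjo⟩ | ⟨hjc, hjo⟩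
  · exact main α β hαβ hα hjc hjo
  · exact main β α (Ne.symm hαβ) hβ hjc hjo

lemma evB (n : ℕ) (hn : 1 ≤ n) (p : ℝ → ℂ[X])
    (hdeg : ∀ t ∈ Set.Icc (0:ℝ) 1, (p t).degree = n)
    (hcont : ∀ i : ℕ, ContinuousOn (fun t => (p t).coeff i) (Set.Icc (0:ℝ) 1))
    (hmid : ∀ t ∈ Set.Ioo (0:ℝ) 1, (criticalValues (p t)).ncard = 3)
    {t0 : ℝ} (ht0 : t0 ∈ Set.Ioo (0:ℝ) 1)
    (hP : ∃ x : ℂ, (derivative (p t0)).eval x = 0 ∧ (derivative (derivative (p t0))).eval x = 0) :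
    ∀ᶠ u in nhdsWithin t0 (Set.Ioo (0:ℝ) 1), ∃ x : ℂ,
      (derivative (p u)).eval x = 0 ∧ (derivative (derivative (p u))).eval x = 0 := by
  by_contra hcon
  rw [Filter.not_eventually] at hcon
  obtain ⟨t, htk, htt⟩ := seq_of_frequently hcon
  have htIoo : ∀ k, t k ∈ Set.Ioo (0:ℝ) 1 := fun k => (htk k).1
  have htIcc : ∀ k, t k ∈ Set.Icc (0:ℝ) 1 := fun k => Set.Ioo_subset_Icc_self (htIoo k)
  have ht0' : t0 ∈ Set.Icc (0:ℝ) 1 := Set.Ioo_subset_Icc_self ht0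
  obtain ⟨φ, hφmono, γ, g, hset, hγt, hgmem, hsub⟩ :=
    cvs n hn p hdeg hcont htIcc ht0' htt (fun k => hmid _ (htIoo k))
  -- data from hP
  obtain ⟨x0, hx1, hx2⟩ := hP
  set c : ℂ := (p t0).eval x0 with hc
  have hne0 : p t0 - C c ≠ 0 := by
    intro h
    have h2 : (p t0).natDegree = n := natDegree_eq_of_degree_eq_some (hdeg t0 ht0')
    have h3 : p t0 ≠ 0 := by
      intro hz
      have hb := hdeg t0 ht0'
      rw [hz, degree_zero] at hb
      exact absurd hb.symm (by simp)
    have h4 : (p t0).coeff n ≠ 0 := by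
      rw [← h2, coeff_natDegree]
      exact leadingCoeff_ne_zero.mpr h3
    apply h4
    have h1 : (p t0 - C c).coeff n = (p t0).coeff n := by
      rw [coeff_sub, coeff_C, if_neg (by omega), sub_zero]
    rw [← h1, h, coeff_zero]
  have hm : 3 ≤ (p t0 - C c).rootMultiplicity x0 := by
    have : 2 < (p t0 - C c).rootMultiplicity x0 := by
      apply lt_rootMultiplicity_of_isRoot_iterate_derivative hne0
      intro mm hmm
      interval_cases mm
      · simp only [Function.iterate_zero, id_eq, IsRoot, eval_sub, eval_C, hc, sub_self]
      · simpa [IsRoot, derivative_sub] using hx1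
      · have hd2 : derivative^[2] (p t0 - C c) = derivative (derivative (p t0)) := by
          simp [Function.iterate_succ, derivative_sub]
        rw [hd2]
        exact hx2
    omega
  have hcmem : c ∈ criticalValues (p t0) := mem_criticalValues.mpr ⟨x0, hx1, rfl⟩
  -- g is injective (pairwise distinct values)
  have hcard3 : ({g 0, g 1, g 2} : Set ℂ).ncard = 3 := by
    have hfin : ({g 0, g 1, g 2} : Set ℂ).Finite := Set.toFinite _
    have hle : ({g 0, g 1, g 2} : Set ℂ).ncard ≤ 3 := by
      have h1 := Set.ncard_insert_le (g 0) ({g 1, g 2} : Set ℂ)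
      have h2 := Set.ncard_insert_le (g 1) ({g 2} : Set ℂ)
      rw [Set.ncard_singleton] at h2
      omega
    have hge : 3 ≤ ({g 0, g 1, g 2} : Set ℂ).ncard := by
      have h5 := Set.ncard_le_ncard hsub hfin
      rw [hmid t0 ht0] at h5
      exact h5
    omega
  obtain ⟨hd01, hd02, hd12⟩ := pairwise_of_ncard_three hcard3
  have hgne : ∀ i i' : Fin 3, i ≠ i' → g i ≠ g i' := by
    intro i i' hne
    fin_cases i <;> fin_cases i' <;> first
      | exact absurd rfl hne
      | exact hd01 | exact hd02 | exact hd12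
      | exact hd01.symm | exact hd02.symm | exact hd12.symm
  -- find j with g j = c
  have hjex : ∃ j : Fin 3, g j = c := by
    have : c ∈ ({g 0, g 1, g 2} : Set ℂ) := hsub hcmem
    simp only [Set.mem_insert_iff, Set.mem_singleton_iff] at this
    rcases this with h | h | h
    exacts [⟨0, h.symm⟩, ⟨1, h.symm⟩, ⟨2, h.symm⟩]
  obtain ⟨j, hgj⟩ := hjex
  -- δ0
  have hδex : ∃ δ0 : ℝ, 0 < δ0 ∧ ∀ i, i ≠ j → 2*δ0 ≤ dist c (g i) := by
    have hne' : ((Finset.univ.filter (fun i : Fin 3 => i ≠ j))).Nonempty := by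
      fin_cases j
      · exact ⟨1, by decide⟩
      · exact ⟨0, by decide⟩
      · exact ⟨0, by decide⟩
    obtain ⟨i0, hi0mem, hi0min⟩ :=
      (Finset.univ.filter (fun i : Fin 3 => i ≠ j)).exists_min_image
        (fun i => dist c (g i)) hne'
    have hi0ne : i0 ≠ j := (Finset.mem_filter.mp hi0mem).2
    have hpos : 0 < dist c (g i0) := by
      rw [dist_pos]
      intro h
      exact hgne i0 j hi0ne (by rw [hgj, h])
    refine ⟨dist c (g i0) / 2, by linarith, ?_⟩
    intro i hi
    have := hi0min i (Finset.mem_filter.mpr ⟨Finset.mem_univ i, hi⟩)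
    linarith
  obtain ⟨δ0, hδ0, hothers⟩ := hδex
  have Hu := Hu_of p (t ∘ φ) γ g j c hδ0 hset hγt hgj hothers
  have hc' : Tendsto (γ j) atTop (nhds c) := hgj ▸ hγt j
  have hcore := seqcore n hn p hdeg hcont (fun k => htIcc (φ k)) ht0'
    (htt.comp hφmono.tendsto_atTop) hc' hδ0 Hu hm rfl
  obtain ⟨k, hk⟩ := hcore.exists
  exact (htk (φ k)).2 hk

lemma CL (n : ℕ) (hn : 1 ≤ n) (p : ℝ → ℂ[X])
    (hdeg : ∀ t ∈ Set.Icc (0:ℝ) 1, (p t).degree = n)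
    (hcont : ∀ i : ℕ, ContinuousOn (fun t => (p t).coeff i) (Set.Icc (0:ℝ) 1))
    {t : ℕ → ℝ} (ht : ∀ k, t k ∈ Set.Icc (0:ℝ) 1) {t0 : ℝ} (ht0 : t0 ∈ Set.Icc (0:ℝ) 1)
    (htt : Tendsto t atTop (nhds t0))
    (hPk : ∀ k, ∃ x : ℂ, (derivative (p (t k))).eval x = 0 ∧
      (derivative (derivative (p (t k)))).eval x = 0) :
    ∃ x : ℂ, (derivative (p t0)).eval x = 0 ∧ (derivative (derivative (p t0))).eval x = 0 := by
  have hnd : ∀ s ∈ Set.Icc (0:ℝ) 1, (p s).natDegree = n :=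
    fun s hs => natDegree_eq_of_degree_eq_some (hdeg s hs)
  have hne : ∀ s ∈ Set.Icc (0:ℝ) 1, p s ≠ 0 := by
    intro s hs h
    have := hdeg s hs
    rw [h, degree_zero] at this
    exact absurd this.symm (by simp)
  have hlcne : ∀ s ∈ Set.Icc (0:ℝ) 1, (p s).coeff n ≠ 0 := by
    intro s hs
    have h1 : (p s).coeff n = (p s).leadingCoeff := by rw [leadingCoeff, hnd s hs]
    rw [h1]
    exact leadingCoeff_ne_zero.mpr (hne s hs)
  have htt' : Tendsto t atTop (nhdsWithin t0 (Set.Icc (0:ℝ) 1)) :=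
    tendsto_nhdsWithin_iff.mpr ⟨htt, Eventually.of_forall ht⟩
  have hcv : ∀ i, Tendsto (fun k => (p (t k)).coeff i) atTop (nhds ((p t0).coeff i)) :=
    fun i => (hcont i t0 ht0).tendsto.comp htt'
  have hDcoeffs : ∀ s ∈ Set.Icc (0:ℝ) 1, (derivative (p s)).coeff (n-1) ≠ 0 := by
    intro s hs
    rw [coeff_derivative]
    have hnn : n - 1 + 1 = n := by omega
    rw [hnn]
    exact mul_ne_zero (hlcne s hs) (Nat.cast_add_one_ne_zero (n-1))
  have hDd : ∀ s ∈ Set.Icc (0:ℝ) 1, (derivative (p s)).natDegree = n - 1 := by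
    intro s hs
    refine le_antisymm ?_ (le_natDegree_of_ne_zero (hDcoeffs s hs))
    calc (derivative (p s)).natDegree ≤ (p s).natDegree - 1 := natDegree_derivative_le _
      _ = n - 1 := by rw [hnd s hs]
  have hDi0 : derivative (p t0) ≠ 0 := fun h => hDcoeffs t0 ht0 (by rw [h, coeff_zero])
  have hDconv : ∀ i, Tendsto (fun k => (derivative (p (t k))).coeff i) atTop
      (nhds ((derivative (p t0)).coeff i)) := by
    intro i
    simp only [coeff_derivative]
    exact (hcv (i+1)).mul tendsto_const_nhds
  have hD2conv : ∀ i, Tendsto (fun k => (derivative (derivative (p (t k)))).coeff i) atTop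
      (nhds ((derivative (derivative (p t0))).coeff i)) := by
    intro i
    simp only [coeff_derivative]
    exact (((hcv (i+1+1)).mul tendsto_const_nhds).mul tendsto_const_nhds)
  choose x hx1 hx2 using hPk
  obtain ⟨K, M, hM, hKM⟩ := roots_bounded (fun k => hDd _ (ht k)) (hDd t0 ht0) hDi0 hDconv
  have hbdd : ∀ k, x (k+K) ∈ closedBall (0:ℂ) M := by
    intro k
    rw [mem_closedBall, dist_zero_right]
    exact hKM (k+K) (by omega) _ (hx1 (k+K))
  obtain ⟨w, _, ψ, hψmono, hψtend⟩ :=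
    tendsto_subseq_of_bounded (isBounded_closedBall (x := (0:ℂ)) (r := M)) hbdd
  have hmono : StrictMono (fun k => ψ k + K) := fun a b hab =>
    Nat.add_lt_add_right (hψmono hab) K
  have hmt : Tendsto (fun k => ψ k + K) atTop atTop := hmono.tendsto_atTop
  refine ⟨w, ?_, ?_⟩
  · have h1 : Tendsto (fun k => (derivative (p (t (ψ k + K)))).eval (x (ψ k + K))) atTop
        (nhds ((derivative (p t0)).eval w)) :=
      eval_tendsto (N := n) (fun k => (hDd _ (ht _)).le.trans (by omega))
        ((hDd t0 ht0).le.trans (by omega)) (fun i => (hDconv i).comp hmt) hψtend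
    have h2 : (fun k => (derivative (p (t (ψ k + K)))).eval (x (ψ k + K))) = fun _ => (0:ℂ) := by
      funext k; exact hx1 _
    rw [h2] at h1
    exact tendsto_nhds_unique h1 tendsto_const_nhds
  · have h1 : Tendsto (fun k => (derivative (derivative (p (t (ψ k + K))))).eval (x (ψ k + K)))
        atTop (nhds ((derivative (derivative (p t0))).eval w)) :=
      eval_tendsto (N := n)
        (fun k => ((natDegree_derivative_le _).trans ((Nat.sub_le _ _).trans
          ((hDd _ (ht _)).le.trans (by omega)))))
        ((natDegree_derivative_le _).trans ((Nat.sub_le _ _).trans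
          ((hDd t0 ht0).le.trans (by omega))))
        (fun i => (hD2conv i).comp hmt) hψtend
    have h2 : (fun k => (derivative (derivative (p (t (ψ k + K))))).eval (x (ψ k + K)))
        = fun _ => (0:ℂ) := by
      funext k; exact hx2 _
    rw [h2] at h1
    exact tendsto_nhds_unique h1 tendsto_const_nhds


/-- A tree having both a white vertex of degree ≥ 3 and a black vertex of degree ≥ 3
is not Z-homotopic to a chain. -/
theorem not_Zhomotopic_to_chain (n : ℕ) (hn : 1 ≤ n) (p : ℝ → ℂ[X])
    (hdeg : ∀ t ∈ Set.Icc (0 : ℝ) 1, (p t).degree = n)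
    (hcont : ∀ i : ℕ, ContinuousOn (fun t => (p t).coeff i) (Set.Icc (0 : ℝ) 1))
    (h0 : (criticalValues (p 0)).ncard = 2)
    (h1 : (criticalValues (p 1)).ncard = 2)
    (hmid : ∀ t ∈ Set.Ioo (0 : ℝ) 1, (criticalValues (p t)).ncard = 3)
    (α β : ℂ) (hαβ : α ≠ β) (hcv : criticalValues (p 0) = {α, β})
    (hα : ∃ x : ℂ, 3 ≤ (p 0 - C α).rootMultiplicity x)
    (hβ : ∃ x : ℂ, 3 ≤ (p 0 - C β).rootMultiplicity x) :
    ¬ (∀ γ ∈ criticalValues (p 1), ∀ x : ℂ, (p 1 - C γ).rootMultiplicity x ≤ 2) := by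
  intro hchain
  set PS : Set ℝ := {u | ∃ x : ℂ, (derivative (p u)).eval x = 0 ∧
    (derivative (derivative (p u))).eval x = 0} with hPS
  set O : Set ℝ := Set.Ioo 0 1 with hO
  -- PS contains a right-neighbourhood of 0 within O, and is relatively open and closed
  have hstep1 : ∀ u ∈ O, u ∈ PS := by
    haveI : PreconnectedSpace ↥O := Subtype.preconnectedSpace isPreconnected_Ioo
    set S' : Set ↥O := Subtype.val ⁻¹' PS with hS'
    have hopen : IsOpen S' := by
      rw [isOpen_iff_mem_nhds]
      rintro ⟨u, hu⟩ hmem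
      rw [nhds_subtype_eq_comap, mem_comap]
      have hev := evB n hn p hdeg hcont hmid hu hmem
      obtain ⟨V, hV, hVsub⟩ := eventually_nhdsWithin_iff.mp hev |>.exists_mem
      exact ⟨V, hV, fun ⟨w, hw⟩ hwV => hVsub _ hwV hw⟩
    have hclosedC : IsClosed (PS ∩ Set.Icc (0:ℝ) 1) := by
      apply IsSeqClosed.isClosed
      intro u L hu huL
      have hLIcc : L ∈ Set.Icc (0:ℝ) 1 :=
        isClosed_Icc.isSeqClosed (fun k => (hu k).2) huL
      exact ⟨CL n hn p hdeg hcont (fun k => (hu k).2) hLIcc huL (fun k => (hu k).1), hLIcc⟩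
    have hclosed : IsClosed S' := by
      have heq : S' = Subtype.val ⁻¹' (PS ∩ Set.Icc (0:ℝ) 1) := by
        ext ⟨w, hw⟩
        simp only [Set.mem_preimage, Set.mem_inter_iff]
        exact ⟨fun h => ⟨h, Set.Ioo_subset_Icc_self hw⟩, fun h => h.1⟩
      rw [heq]
      exact hclosedC.preimage continuous_subtype_val
    have hnonempty : S'.Nonempty := by
      have hev := evA n hn p hdeg hcont hmid α β hαβ hcv hα hβ
      obtain ⟨ε, hε, hball⟩ := Metric.mem_nhdsWithin_iff.mp hev
      set u : ℝ := min (ε/2) (1/2) with hu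
      have hu0 : 0 < u := lt_min (by linarith) (by norm_num)
      have huO : u ∈ O := ⟨hu0, lt_of_le_of_lt (min_le_right _ _) (by norm_num)⟩
      have hud : dist u 0 < ε := by
        rw [Real.dist_eq, sub_zero, abs_of_pos hu0]
        exact lt_of_le_of_lt (min_le_left _ _) (by linarith)
      exact ⟨⟨u, huO⟩, hball ⟨mem_ball.mpr hud, huO⟩⟩
    have : S' = Set.univ := by
      rcases isClopen_iff.mp ⟨hclosed, hopen⟩ with h | h
      · exact absurd (h ▸ hnonempty) (by simp)
      · exact h
    intro u hu
    have : (⟨u, hu⟩ : ↥O) ∈ S' := this ▸ Set.mem_univ _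
    exact this
  -- pass to t = 1
  have hP1 : (1:ℝ) ∈ PS := by
    set t : ℕ → ℝ := fun k => 1 - 1/(k+2) with htdef
    have htO : ∀ k, t k ∈ O := by
      intro k
      constructor
      · have h2 : (1:ℝ)/(k+2) < 1 := by
          rw [div_lt_one (by positivity)]
          have : (0:ℝ) ≤ (k:ℝ) := Nat.cast_nonneg k
          linarith
        simp only [htdef]
        linarith
      · have h2 : (0:ℝ) < 1/(k+2) := by positivity
        simp only [htdef]
        linarith
    have htt : Tendsto t atTop (nhds 1) := by
      have h2 : Tendsto (fun k : ℕ => 1/((k:ℝ)+2)) atTop (nhds 0) := by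
        have h3 := (tendsto_one_div_add_atTop_nhds_zero_nat (𝕜 := ℝ)).comp (tendsto_add_atTop_nat 1)
        apply h3.congr
        intro k
        simp only [Function.comp_apply]
        push_cast
        ring
      have h4 := (tendsto_const_nhds (x := (1:ℝ)) (f := atTop (α := ℕ))).sub h2
      rw [sub_zero] at h4
      exact h4
    exact CL n hn p hdeg hcont (fun k => Set.Ioo_subset_Icc_self (htO k))
      (Set.right_mem_Icc.mpr zero_le_one) htt (fun k => hstep1 _ (htO k))
  -- conclude
  obtain ⟨x, hx1, hx2⟩ := hP1
  have h1Icc : (1:ℝ) ∈ Set.Icc (0:ℝ) 1 := Set.right_mem_Icc.mpr zero_le_one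
  set γ : ℂ := (p 1).eval x with hγ
  have hγmem : γ ∈ criticalValues (p 1) := mem_criticalValues.mpr ⟨x, hx1, rfl⟩
  have hne0 : p 1 - C γ ≠ 0 := by
    intro h
    have h2 : (p 1).natDegree = n := natDegree_eq_of_degree_eq_some (hdeg 1 h1Icc)
    have h3 : p 1 ≠ 0 := by
      intro hz
      have hb := hdeg 1 h1Icc
      rw [hz, degree_zero] at hb
      exact absurd hb.symm (by simp)
    have h4 : (p 1).coeff n ≠ 0 := by
      rw [← h2, coeff_natDegree]
      exact leadingCoeff_ne_zero.mpr h3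
    apply h4
    have h5 : (p 1 - C γ).coeff n = (p 1).coeff n := by
      rw [coeff_sub, coeff_C, if_neg (by omega), sub_zero]
    rw [← h5, h, coeff_zero]
  have hm : 3 ≤ (p 1 - C γ).rootMultiplicity x := by
    have h2 : 2 < (p 1 - C γ).rootMultiplicity x := by
      apply lt_rootMultiplicity_of_isRoot_iterate_derivative hne0
      intro mm hmm
      interval_cases mm
      · simp only [Function.iterate_zero, id_eq, IsRoot, eval_sub, eval_C, hγ, sub_self]
      · simpa [IsRoot, derivative_sub] using hx1
      · have hd2 : derivative^[2] (p 1 - C γ) = derivative (derivative (p 1)) := by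
          simp [Function.iterate_succ, derivative_sub]
        rw [hd2]
        exact hx2
    omega
  have := hchain γ hγmem x
  omega
end

section
/- There is no Z-homotopy of degree 5 between a Chebyshev polynomial whose two fiber multiplicity multisets are both {3,1,1} and a Chebyshev polynomial whose two fiber multiplicity multisets are both {2,2,1}. Precisely: there is no map λ ↦ p_λ from [0,1] to ℂ[X] with deg p_λ = 5 for all λ and all coefficients continuous in λ, such that (i) p_0 has exactly two distinct critical values α ≠ β and the multisets of root multiplicities of p_0 − α and of p_0 − β are both {3,1,1}; (ii) p_1 has exactly two distinct critical values γ ≠ δ and the multisets of root multiplicities of p_1 − γ and of p_1 − δ are both {2,2,1}; (iii) p_λ has exactly three distinct critical values for all λ ∈ (0,1). (This is the statement that the 5-edge trees T_3 and T_5 cannot be Z-homotopic.) -/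
open Polynomial Filter Set

/-- The multiset of multiplicities of the roots of `p - α` (one entry per distinct root). -/
noncomputable def fiberMults (p : ℂ[X]) (α : ℂ) : Multiset ℕ :=
  (p - C α).roots.toFinset.val.map fun x => (p - C α).rootMultiplicity x

namespace ZH

/-- Two distinct critical points with a common critical value. -/
def PA (q : ℂ[X]) : Prop :=
  ∃ r s : ℂ, r ≠ s ∧ q.eval r = q.eval s ∧ q.derivative.eval r = 0 ∧ q.derivative.eval s = 0

/-- The derivative has a multiple root. -/
def PB (q : ℂ[X]) : Prop :=
  ∃ r : ℂ, q.derivative.eval r = 0 ∧ q.derivative.derivative.eval r = 0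

/-- A critical point of fiber-multiplicity at least four. -/
def PM (q : ℂ[X]) : Prop :=
  ∃ ρ : ℂ, q.derivative.eval ρ = 0 ∧ 4 ≤ (q - C (q.eval ρ)).rootMultiplicity ρ

/-- First divided difference of a degree-5 polynomial. -/
def Gf (c1 c2 c3 c4 c5 r s : ℂ) : ℂ :=
  c1 + c2*(r+s) + c3*(r^2+r*s+s^2) + c4*(r^3+r^2*s+r*s^2+s^3)
    + c5*(r^4+r^3*s+r^2*s^2+r*s^3+s^4)

/-- Partial derivative of `Gf` in `r` (first argument ignored). -/
def Gxf (c1 c2 c3 c4 c5 r s : ℂ) : ℂ :=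
  c2 + c3*(2*r+s) + c4*(3*r^2+2*r*s+s^2) + c5*(4*r^3+3*r^2*s+2*r*s^2+s^3) + 0*c1

/-- Second-order confluent divided difference (first two arguments ignored). -/
def Kf (c1 c2 c3 c4 c5 r s : ℂ) : ℂ :=
  c3 + 2*c4*(r+s) + c5*(3*r^2+4*r*s+3*s^2) + 0*c1 + 0*c2

lemma cont7_Gf : Continuous fun v : ℂ × ℂ × ℂ × ℂ × ℂ × ℂ × ℂ =>
    Gf v.1 v.2.1 v.2.2.1 v.2.2.2.1 v.2.2.2.2.1 v.2.2.2.2.2.1 v.2.2.2.2.2.2 := by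
  unfold Gf; fun_prop

lemma cont7_Gxf : Continuous fun v : ℂ × ℂ × ℂ × ℂ × ℂ × ℂ × ℂ =>
    Gxf v.1 v.2.1 v.2.2.1 v.2.2.2.1 v.2.2.2.2.1 v.2.2.2.2.2.1 v.2.2.2.2.2.2 := by
  unfold Gxf; fun_prop

lemma cont7_Kf : Continuous fun v : ℂ × ℂ × ℂ × ℂ × ℂ × ℂ × ℂ =>
    Kf v.1 v.2.1 v.2.2.1 v.2.2.2.1 v.2.2.2.2.1 v.2.2.2.2.2.1 v.2.2.2.2.2.2 := by
  unfold Kf; fun_prop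

lemma tendsto7 {F : ℂ → ℂ → ℂ → ℂ → ℂ → ℂ → ℂ → ℂ}
    (hF : Continuous fun v : ℂ × ℂ × ℂ × ℂ × ℂ × ℂ × ℂ =>
      F v.1 v.2.1 v.2.2.1 v.2.2.2.1 v.2.2.2.2.1 v.2.2.2.2.2.1 v.2.2.2.2.2.2)
    {α : Type*} {l : Filter α} {f1 f2 f3 f4 f5 f6 f7 : α → ℂ} {a1 a2 a3 a4 a5 a6 a7 : ℂ}
    (h1 : Tendsto f1 l (nhds a1)) (h2 : Tendsto f2 l (nhds a2)) (h3 : Tendsto f3 l (nhds a3))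
    (h4 : Tendsto f4 l (nhds a4)) (h5 : Tendsto f5 l (nhds a5)) (h6 : Tendsto f6 l (nhds a6))
    (h7 : Tendsto f7 l (nhds a7)) :
    Tendsto (fun n => F (f1 n) (f2 n) (f3 n) (f4 n) (f5 n) (f6 n) (f7 n)) l
      (nhds (F a1 a2 a3 a4 a5 a6 a7)) :=
  (hF.tendsto (a1, a2, a3, a4, a5, a6, a7)).comp
    (h1.prodMk_nhds (h2.prodMk_nhds (h3.prodMk_nhds (h4.prodMk_nhds
      (h5.prodMk_nhds (h6.prodMk_nhds h7))))))

section Explicit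

variable {q : ℂ[X]}

lemma eval_explicit (h5 : q.natDegree = 5) (z : ℂ) :
    q.eval z = q.coeff 0 + q.coeff 1 * z + q.coeff 2 * z^2 + q.coeff 3 * z^3
      + q.coeff 4 * z^4 + q.coeff 5 * z^5 := by
  rw [eval_eq_sum_range' (show q.natDegree < 6 by omega)]
  simp only [Finset.sum_range_succ, Finset.sum_range_zero]
  ring

lemma evald_explicit (h5 : q.natDegree = 5) (z : ℂ) :
    q.derivative.eval z = q.coeff 1 + 2 * q.coeff 2 * z + 3 * q.coeff 3 * z^2
      + 4 * q.coeff 4 * z^3 + 5 * q.coeff 5 * z^4 := by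
  have hd : q.derivative.natDegree < 5 :=
    lt_of_le_of_lt (natDegree_derivative_le q) (by omega)
  rw [eval_eq_sum_range' hd]
  simp only [Finset.sum_range_succ, Finset.sum_range_zero, coeff_derivative]
  push_cast
  ring

lemma evald2_explicit (h5 : q.natDegree = 5) (z : ℂ) :
    q.derivative.derivative.eval z = 2 * q.coeff 2 + 6 * q.coeff 3 * z
      + 12 * q.coeff 4 * z^2 + 20 * q.coeff 5 * z^3 := by
  have hd : q.derivative.derivative.natDegree < 4 := by
    have h1 := natDegree_derivative_le q
    have h2 := natDegree_derivative_le q.derivative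
    omega
  rw [eval_eq_sum_range' hd]
  simp only [Finset.sum_range_succ, Finset.sum_range_zero, coeff_derivative]
  push_cast
  ring

lemma evald3_explicit (h5 : q.natDegree = 5) (z : ℂ) :
    q.derivative.derivative.derivative.eval z = 6 * q.coeff 3 + 24 * q.coeff 4 * z
      + 60 * q.coeff 5 * z^2 := by
  have hd : q.derivative.derivative.derivative.natDegree < 3 := by
    have h1 := natDegree_derivative_le q
    have h2 := natDegree_derivative_le q.derivative
    have h3 := natDegree_derivative_le q.derivative.derivative
    omega
  rw [eval_eq_sum_range' hd]
  simp only [Finset.sum_range_succ, Finset.sum_range_zero, coeff_derivative]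
  push_cast
  ring

lemma idG (h5 : q.natDegree = 5) (r s : ℂ) :
    q.eval r - q.eval s = (r - s) * Gf (q.coeff 1) (q.coeff 2) (q.coeff 3) (q.coeff 4)
      (q.coeff 5) r s := by
  rw [eval_explicit h5 r, eval_explicit h5 s]; unfold Gf; ring

lemma idGx (h5 : q.natDegree = 5) (r s : ℂ) :
    q.derivative.eval r = Gf (q.coeff 1) (q.coeff 2) (q.coeff 3) (q.coeff 4) (q.coeff 5) r s
      + (r - s) * Gxf (q.coeff 1) (q.coeff 2) (q.coeff 3) (q.coeff 4) (q.coeff 5) r s := by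
  rw [evald_explicit h5 r]; unfold Gf Gxf; ring

lemma idGz (h5 : q.natDegree = 5) (r s : ℂ) :
    q.derivative.eval s = Gf (q.coeff 1) (q.coeff 2) (q.coeff 3) (q.coeff 4) (q.coeff 5) r s
      - (r - s) * Gxf (q.coeff 1) (q.coeff 2) (q.coeff 3) (q.coeff 4) (q.coeff 5) s r := by
  rw [evald_explicit h5 s]; unfold Gf Gxf; ring

lemma idK (c1 c2 c3 c4 c5 r s : ℂ) :
    Gxf c1 c2 c3 c4 c5 r s - Gxf c1 c2 c3 c4 c5 s r = (r - s) * Kf c1 c2 c3 c4 c5 r s := by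
  unfold Gxf Kf; ring

lemma idGdiag (h5 : q.natDegree = 5) (r : ℂ) :
    Gf (q.coeff 1) (q.coeff 2) (q.coeff 3) (q.coeff 4) (q.coeff 5) r r
      = q.derivative.eval r := by
  rw [evald_explicit h5 r]; unfold Gf; ring

lemma idGxdiag (h5 : q.natDegree = 5) (r : ℂ) :
    2 * Gxf (q.coeff 1) (q.coeff 2) (q.coeff 3) (q.coeff 4) (q.coeff 5) r r
      = q.derivative.derivative.eval r := by
  rw [evald2_explicit h5 r]; unfold Gxf; ring

lemma idKdiag (h5 : q.natDegree = 5) (r : ℂ) :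
    6 * Kf (q.coeff 1) (q.coeff 2) (q.coeff 3) (q.coeff 4) (q.coeff 5) r r
      = q.derivative.derivative.derivative.eval r := by
  rw [evald3_explicit h5 r]; unfold Kf; ring

end Explicit

lemma root_bound {b0 b1 b2 b3 b4 z : ℂ} (hb : b4 ≠ 0)
    (hz : b0 + b1*z + b2*z^2 + b3*z^3 + b4*z^4 = 0) :
    ‖z‖ ≤ max 1 ((‖b0‖ + ‖b1‖ + ‖b2‖ + ‖b3‖) / ‖b4‖) := by
  by_contra hlt
  push_neg at hlt
  have h1 : (1:ℝ) < ‖z‖ := lt_of_le_of_lt (le_max_left _ _) hlt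
  have hS : (‖b0‖ + ‖b1‖ + ‖b2‖ + ‖b3‖) / ‖b4‖ < ‖z‖ := lt_of_le_of_lt (le_max_right _ _) hlt
  have hb4 : (0:ℝ) < ‖b4‖ := norm_pos_iff.2 hb
  rw [div_lt_iff₀ hb4] at hS
  have hz3 : (0:ℝ) < ‖z‖^3 := by positivity
  have e0 : b4*z^4 = -(b0 + b1*z + b2*z^2 + b3*z^3) := by linear_combination hz
  have e1 : ‖b4‖ * ‖z‖^4 ≤ ‖b0‖ + ‖b1‖*‖z‖ + ‖b2‖*‖z‖^2 + ‖b3‖*‖z‖^3 := by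
    calc ‖b4‖ * ‖z‖^4 = ‖b4*z^4‖ := by rw [norm_mul, norm_pow]
    _ = ‖b0 + b1*z + b2*z^2 + b3*z^3‖ := by rw [e0, norm_neg]
    _ ≤ ‖b0 + b1*z + b2*z^2‖ + ‖b3*z^3‖ := norm_add_le _ _
    _ ≤ (‖b0 + b1*z‖ + ‖b2*z^2‖) + ‖b3*z^3‖ := by gcongr; exact norm_add_le _ _
    _ ≤ ((‖b0‖ + ‖b1*z‖) + ‖b2*z^2‖) + ‖b3*z^3‖ := by gcongr; exact norm_add_le _ _
    _ = ‖b0‖ + ‖b1‖*‖z‖ + ‖b2‖*‖z‖^2 + ‖b3‖*‖z‖^3 := by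
        rw [norm_mul, norm_mul, norm_mul, norm_pow, norm_pow]
  have hzp : (0:ℝ) ≤ ‖z‖ := norm_nonneg z
  have q1 : (1:ℝ) ≤ ‖z‖^3 := by nlinarith [h1, hzp]
  have q2 : ‖z‖ ≤ ‖z‖^3 := by nlinarith [h1, hzp]
  have q3 : ‖z‖^2 ≤ ‖z‖^3 := by nlinarith [h1, hzp]
  have m0 := mul_le_mul_of_nonneg_left q1 (norm_nonneg b0)
  have m1 := mul_le_mul_of_nonneg_left q2 (norm_nonneg b1)
  have m2 := mul_le_mul_of_nonneg_left q3 (norm_nonneg b2)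
  have hfin := mul_lt_mul_of_pos_right hS hz3
  have hring : ‖z‖ * ‖b4‖ * ‖z‖^3 = ‖b4‖ * ‖z‖^4 := by ring
  nlinarith [e1, m0, m1, m2, hfin, hring]

section SinglePoly

variable {q : ℂ[X]}

lemma q_ne_zero (hq : q.degree = 5) : q ≠ 0 := by
  intro h; rw [h, degree_zero] at hq; exact (by decide : ¬ ((⊥ : WithBot ℕ) = 5)) hq

lemma q_natDegree (hq : q.degree = 5) : q.natDegree = 5 := natDegree_eq_of_degree_eq_some hq

lemma qd_ne_zero (hq : q.degree = 5) : q.derivative ≠ 0 := by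
  have h1 : q.derivative.degree = ((5 - 1 : ℕ) : WithBot ℕ) := by
    rw [← q_natDegree hq]
    exact degree_derivative_eq q (by rw [q_natDegree hq]; omega)
  intro h
  rw [h, degree_zero] at h1
  exact (by decide : ¬ ((⊥ : WithBot ℕ) = ((4:ℕ) : WithBot ℕ))) h1

lemma qd_natDegree (hq : q.degree = 5) : q.derivative.natDegree = 4 := by
  have h1 : q.derivative.degree = ((5 - 1 : ℕ) : WithBot ℕ) := by
    rw [← q_natDegree hq]
    exact degree_derivative_eq q (by rw [q_natDegree hq]; omega)
  exact natDegree_eq_of_degree_eq_some h1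

lemma q_sub_C_ne_zero (hq : q.degree = 5) (a : ℂ) : q - C a ≠ 0 := by
  have : (q - C a).degree = 5 := by
    rw [degree_sub_C]; exact hq
    rw [hq]; decide
  intro h; rw [h, degree_zero] at this
  exact (by decide : ¬ ((⊥ : WithBot ℕ) = 5)) this

lemma rootMult_ge {f : ℂ[X]} (hf : f ≠ 0) {x : ℂ} {n : ℕ}
    (h : ∀ m ≤ n, (derivative^[m] f).eval x = 0) : n + 1 ≤ f.rootMultiplicity x :=
  (lt_rootMultiplicity_iff_isRoot_iterate_derivative hf).2 (fun m hm => h m hm)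

lemma rootMult_ge_two {f : ℂ[X]} (hf : f ≠ 0) {x : ℂ}
    (h0 : f.eval x = 0) (h1 : f.derivative.eval x = 0) : 2 ≤ f.rootMultiplicity x := by
  refine rootMult_ge hf (n := 1) ?_
  intro m hm
  interval_cases m
  · exact h0
  · simpa [Function.iterate_one] using h1

lemma rootMult_ge_three {f : ℂ[X]} (hf : f ≠ 0) {x : ℂ}
    (h0 : f.eval x = 0) (h1 : f.derivative.eval x = 0)
    (h2 : f.derivative.derivative.eval x = 0) : 3 ≤ f.rootMultiplicity x := by
  refine rootMult_ge hf (n := 2) ?_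
  intro m hm
  interval_cases m
  · exact h0
  · simpa using h1
  · simpa [Function.iterate_succ_apply'] using h2

lemma rootMult_ge_four {f : ℂ[X]} (hf : f ≠ 0) {x : ℂ}
    (h0 : f.eval x = 0) (h1 : f.derivative.eval x = 0)
    (h2 : f.derivative.derivative.eval x = 0)
    (h3 : f.derivative.derivative.derivative.eval x = 0) : 4 ≤ f.rootMultiplicity x := by
  refine rootMult_ge hf (n := 3) ?_
  intro m hm
  interval_cases m
  · exact h0
  · simpa using h1
  · simpa [Function.iterate_succ_apply'] using h2
  · simpa [Function.iterate_succ_apply'] using h3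

lemma mem_fiberMults {a x : ℂ} (h0 : q - C a ≠ 0) (hx : (q - C a).eval x = 0) :
    (q - C a).rootMultiplicity x ∈ fiberMults q a := by
  unfold fiberMults
  apply Multiset.mem_map_of_mem
  rw [Finset.mem_val, Multiset.mem_toFinset, mem_roots']
  exact ⟨h0, hx⟩

lemma fiber311_no_two_doubles {a : ℂ} (h0 : q - C a ≠ 0)
    (hfib : fiberMults q a = {3, 1, 1}) {r s : ℂ} (hrs : r ≠ s)
    (hr : 2 ≤ (q - C a).rootMultiplicity r) (hs : 2 ≤ (q - C a).rootMultiplicity s) : False := by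
  have hrroot : r ∈ (q - C a).roots.toFinset := by
    rw [Multiset.mem_toFinset, mem_roots']
    exact ⟨h0, (rootMultiplicity_pos h0).1 (by omega)⟩
  have hsroot : s ∈ (q - C a).roots.toFinset := by
    rw [Multiset.mem_toFinset, mem_roots']
    exact ⟨h0, (rootMultiplicity_pos h0).1 (by omega)⟩
  have hsub : ({r, s} : Finset ℂ) ⊆ (q - C a).roots.toFinset := by
    intro x hx
    rcases Finset.mem_insert.1 hx with h | h
    · exact h ▸ hrroot
    · exact (Finset.mem_singleton.1 h) ▸ hsroot
  have hle : ({r, s} : Finset ℂ).val ≤ (q - C a).roots.toFinset.val := Finset.val_le_iff.2 hsub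
  have hmaple := Multiset.map_le_map (f := fun x => (q - C a).rootMultiplicity x) hle
  have hcount := Multiset.countP_le_of_le (fun n => 2 ≤ n) hmaple
  have hLHS : ({r, s} : Finset ℂ).val.map (fun x => (q - C a).rootMultiplicity x)
      = {(q - C a).rootMultiplicity r, (q - C a).rootMultiplicity s} := by
    rw [Finset.insert_val_of_notMem (by simpa using hrs)]
    simp
  rw [hLHS] at hcount
  have h2 : Multiset.countP (fun n => 2 ≤ n)
      ({(q - C a).rootMultiplicity r, (q - C a).rootMultiplicity s} : Multiset ℕ) = 2 := by
    simp [Multiset.insert_eq_cons, ← Multiset.cons_zero, Multiset.countP_cons, hr, hs]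
  have h1 : Multiset.countP (fun n => 2 ≤ n) ({3, 1, 1} : Multiset ℕ) = 1 := by decide
  unfold fiberMults at hfib
  rw [hfib, h1, h2] at hcount
  omega

lemma fiber_entry_le3 {a x : ℂ} (h0 : q - C a ≠ 0) (hx : (q - C a).eval x = 0)
    (hfib : fiberMults q a = {3, 1, 1}) : (q - C a).rootMultiplicity x ≤ 3 := by
  have := mem_fiberMults h0 hx
  rw [hfib] at this
  rcases Multiset.mem_cons.1 this with h | h
  · omega
  rcases Multiset.mem_cons.1 h with h | h
  · omega
  · rw [Multiset.mem_singleton.1 h]; omega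

lemma fiber_entry_le2 {a x : ℂ} (h0 : q - C a ≠ 0) (hx : (q - C a).eval x = 0)
    (hfib : fiberMults q a = {2, 2, 1}) : (q - C a).rootMultiplicity x ≤ 2 := by
  have := mem_fiberMults h0 hx
  rw [hfib] at this
  rcases Multiset.mem_cons.1 this with h | h
  · omega
  rcases Multiset.mem_cons.1 h with h | h
  · omega
  · rw [Multiset.mem_singleton.1 h]; omega

end SinglePoly

section Counting

variable {q : ℂ[X]}

lemma roots_deriv_card (hq : q.degree = 5) : Multiset.card q.derivative.roots = 4 := by
  rw [splits_iff_card_roots.1 (IsAlgClosed.splits q.derivative), qd_natDegree hq]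

lemma Zset_eq (hq : q.degree = 5) :
    {x : ℂ | q.derivative.eval x = 0} = ↑(q.derivative.roots.toFinset) := by
  ext x
  simp only [Set.mem_setOf_eq, Finset.coe_sort_coe, Finset.mem_coe, Multiset.mem_toFinset,
    mem_roots', IsRoot.def]
  exact ⟨fun h => ⟨qd_ne_zero hq, h⟩, fun h => h.2⟩

lemma Zset_finite (hq : q.degree = 5) : ({x : ℂ | q.derivative.eval x = 0} : Set ℂ).Finite := by
  rw [Zset_eq hq]; exact (q.derivative.roots.toFinset : Finset ℂ).finite_toSet

lemma critval_card_four (hq : q.degree = 5) (hnA : ¬ PA q) (hnB : ¬ PB q) :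
    (criticalValues q).ncard = 4 := by
  have hd0 := qd_ne_zero hq
  have hnodup : q.derivative.roots.Nodup := by
    rw [Multiset.nodup_iff_count_le_one]
    intro x
    by_contra hc
    push_neg at hc
    have h2 : 1 < rootMultiplicity x q.derivative := by rw [← count_roots]; omega
    rw [one_lt_rootMultiplicity_iff_isRoot hd0] at h2
    exact hnB ⟨x, h2.1, h2.2⟩
  have hZcard : ({x : ℂ | q.derivative.eval x = 0}).ncard = 4 := by
    rw [Zset_eq hq, Set.ncard_coe_finset,
      Multiset.toFinset_card_eq_card_iff_nodup.mpr hnodup, roots_deriv_card hq]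
  have hinj : Set.InjOn (fun x => q.eval x) {x : ℂ | q.derivative.eval x = 0} := by
    intro x hx y hy hxy
    by_contra hne
    exact hnA ⟨x, y, hne, hxy, hx, hy⟩
  unfold criticalValues
  rw [Set.ncard_image_of_injOn hinj, hZcard]

lemma critval_card_le_two_of_PA_PB (hq : q.degree = 5) (hA : PA q) (hB : PB q) :
    (criticalValues q).ncard ≤ 2 := by
  obtain ⟨r, s, hrs, hval, hr, hs⟩ := hA
  obtain ⟨r0, hr0, hr0'⟩ := hB
  have hd0 := qd_ne_zero hq
  have h2 : 2 ≤ q.derivative.roots.count r0 := by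
    rw [count_roots]; exact rootMult_ge_two hd0 hr0 hr0'
  obtain ⟨u, hu⟩ := Multiset.le_iff_exists_add.1 (Multiset.le_count_iff_replicate_le.1 h2)
  have hucard : Multiset.card u = 2 := by
    have := roots_deriv_card hq
    rw [hu, Multiset.card_add, Multiset.card_replicate] at this
    omega
  have hZcard : ({x : ℂ | q.derivative.eval x = 0}).ncard ≤ 3 := by
    rw [Zset_eq hq, Set.ncard_coe_finset, hu, Multiset.toFinset_add]
    have h1 : (Multiset.replicate 2 r0).toFinset.card ≤ 1 := by
      simp [Multiset.toFinset_replicate]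
    have h2 := Multiset.toFinset_card_le u
    have h3 := Finset.card_union_le (Multiset.replicate 2 r0).toFinset u.toFinset
    omega
  have hfin := Zset_finite hq
  have hsZ : s ∈ {x : ℂ | q.derivative.eval x = 0} := hs
  have hrZ : r ∈ {x : ℂ | q.derivative.eval x = 0} := hr
  have himg : criticalValues q
      = (fun x => q.eval x) '' ({x : ℂ | q.derivative.eval x = 0} \ {s}) := by
    unfold criticalValues
    apply Set.Subset.antisymm
    · rintro v ⟨x, hx, rfl⟩
      by_cases hxs : x = s
      · exact ⟨r, ⟨hrZ, by simpa using hrs⟩, by subst hxs; exact hval⟩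
      · exact ⟨x, ⟨hx, hxs⟩, rfl⟩
    · exact Set.image_mono Set.diff_subset
  have hb1 : (criticalValues q).ncard ≤ ({x : ℂ | q.derivative.eval x = 0} \ {s}).ncard := by
    rw [himg]; exact Set.ncard_image_le (hfin.diff)
  have hb2 := Set.ncard_diff_singleton_lt_of_mem hsZ hfin
  omega

lemma critval_card_le_two_of_PM (hq : q.degree = 5) (hM : PM q) :
    (criticalValues q).ncard ≤ 2 := by
  obtain ⟨ρ, hρd, hρm⟩ := hM
  set a := q.eval ρ with ha
  have hsub := q_sub_C_ne_zero hq a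
  have hdvd : (X - C ρ)^4 ∣ (q - C a) :=
    dvd_trans (pow_dvd_pow _ hρm) (pow_rootMultiplicity_dvd _ _)
  obtain ⟨u, hu⟩ := hdvd
  have hu0 : u ≠ 0 := by rintro rfl; rw [mul_zero] at hu; exact hsub hu
  have hdq : (q - C a).degree = 5 := by
    rw [degree_sub_C]; exact hq; rw [hq]; decide
  have hXne : ((X - C ρ : ℂ[X])^4) ≠ 0 := pow_ne_zero _ (X_sub_C_ne_zero ρ)
  have h4 : ((X - C ρ : ℂ[X])^4).natDegree = 4 := by
    simp [natDegree_pow, natDegree_X_sub_C]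
  have hnd : (q - C a).natDegree = 5 := natDegree_eq_of_degree_eq_some hdq
  have hmulnd := natDegree_mul hXne hu0
  rw [← hu, hnd, h4] at hmulnd
  have hun : u.natDegree = 1 := by omega
  have hdegu : u.degree = 1 := by rw [degree_eq_natDegree hu0, hun]; rfl
  have hux := eq_X_add_C_of_degree_le_one (le_of_eq hdegu)
  set c1 := u.coeff 1 with hc1def
  set c0 := u.coeff 0 with hc0def
  have hc1 : c1 ≠ 0 := by
    intro h
    have h2 : u.degree ≤ 0 := by rw [hux, h, map_zero, zero_mul, zero_add]; exact degree_C_le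
    rw [hdegu] at h2
    exact absurd h2 (by decide)
  have hdeval : ∀ x : ℂ, q.derivative.eval x = (x - ρ)^3 * (5*c1*x + (4*c0 - c1*ρ)) := by
    intro x
    have hder : q.derivative = derivative (q - C a) := by
      rw [derivative_sub, derivative_C, sub_zero]
    rw [hder, hu, hux]
    rw [derivative_mul, derivative_pow, derivative_sub, derivative_X, derivative_C, sub_zero,
      mul_one, derivative_add, derivative_mul, derivative_C, derivative_X, derivative_C]
    simp only [eval_add, eval_mul, eval_pow, eval_sub, eval_X, eval_C, zero_mul, mul_one,
      add_zero, eval_natCast, eval_ofNat, eval_zero]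
    push_cast
    ring
  have hZsub : {x : ℂ | q.derivative.eval x = 0} ⊆ {ρ, (c1*ρ - 4*c0)/(5*c1)} := by
    intro x hx
    rw [Set.mem_setOf_eq, hdeval x] at hx
    rcases mul_eq_zero.1 hx with h | h
    · left
      have h3 : x - ρ = 0 := pow_eq_zero_iff (by omega : 3 ≠ 0) |>.1 h
      exact sub_eq_zero.1 h3
    · right
      have h51 : (5:ℂ)*c1 ≠ 0 := by
        intro hh
        rcases mul_eq_zero.1 hh with h5 | hc
        · norm_num at h5
        · exact hc1 hc
      show x = (c1*ρ - 4*c0)/(5*c1)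
      rw [eq_div_iff h51]
      linear_combination h
  have hfinpair : ({ρ, (c1*ρ - 4*c0)/(5*c1)} : Set ℂ).Finite := (Set.finite_singleton _).insert _
  have hsubimg : criticalValues q ⊆ (fun x => q.eval x) '' {ρ, (c1*ρ - 4*c0)/(5*c1)} := by
    unfold criticalValues
    exact Set.image_mono hZsub
  have hb1 : (criticalValues q).ncard ≤ ((fun x => q.eval x) '' {ρ, (c1*ρ - 4*c0)/(5*c1)}).ncard :=
    Set.ncard_le_ncard hsubimg (hfinpair.image _)
  have hb2 : ((fun x => q.eval x) '' {ρ, (c1*ρ - 4*c0)/(5*c1)}).ncard ≤ 2 := by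
    rw [Set.image_pair]
    have := Set.ncard_insert_le (q.eval ρ) ({q.eval ((c1*ρ - 4*c0)/(5*c1))} : Set ℂ)
    have h1 : ({q.eval ((c1*ρ - 4*c0)/(5*c1))} : Set ℂ).ncard = 1 := Set.ncard_singleton _
    omega
  omega

end Counting

section Endpoints

variable {q : ℂ[X]}

lemma evalsub {a x : ℂ} (hx : q.eval x = a) : (q - C a).eval x = 0 := by
  rw [eval_sub, eval_C, hx, sub_self]

lemma dsub (a : ℂ) : (q - C a).derivative = q.derivative := by
  rw [derivative_sub, derivative_C, sub_zero]

lemma not_PA_endpoint0 {α β : ℂ} (hq : q.degree = 5) (hcv : criticalValues q = {α, β})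
    (hfα : fiberMults q α = {3,1,1}) (hfβ : fiberMults q β = {3,1,1}) : ¬ PA q := by
  rintro ⟨r, s, hrs, hval, hr, hs⟩
  set a := q.eval r with ha
  have hmem : a ∈ criticalValues q := ⟨r, hr, rfl⟩
  rw [hcv] at hmem
  have hfib : fiberMults q a = {3,1,1} := by
    rcases hmem with h | h
    · rw [h]; exact hfα
    · rw [h]; exact hfβ
  have h0 := q_sub_C_ne_zero hq a
  refine fiber311_no_two_doubles h0 hfib hrs ?_ ?_
  · exact rootMult_ge_two h0 (evalsub ha.symm) (by rw [dsub]; exact hr)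
  · exact rootMult_ge_two h0 (evalsub (by rw [← hval])) (by rw [dsub]; exact hs)

lemma not_PM_endpoint0 {α β : ℂ} (hq : q.degree = 5) (hcv : criticalValues q = {α, β})
    (hfα : fiberMults q α = {3,1,1}) (hfβ : fiberMults q β = {3,1,1}) : ¬ PM q := by
  rintro ⟨ρ, hρ, hm⟩
  set a := q.eval ρ with ha
  have hmem : a ∈ criticalValues q := ⟨ρ, hρ, rfl⟩
  rw [hcv] at hmem
  have hfib : fiberMults q a = {3,1,1} := by
    rcases hmem with h | h
    · rw [h]; exact hfα
    · rw [h]; exact hfβ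
  have h0 := q_sub_C_ne_zero hq a
  have := fiber_entry_le3 h0 (evalsub ha.symm) hfib
  omega

lemma not_PB_endpoint1 {γ δ : ℂ} (hq : q.degree = 5) (hcv : criticalValues q = {γ, δ})
    (hfγ : fiberMults q γ = {2,2,1}) (hfδ : fiberMults q δ = {2,2,1}) : ¬ PB q := by
  rintro ⟨r, hr, hr2⟩
  set a := q.eval r with ha
  have hmem : a ∈ criticalValues q := ⟨r, hr, rfl⟩
  rw [hcv] at hmem
  have hfib : fiberMults q a = {2,2,1} := by
    rcases hmem with h | h
    · rw [h]; exact hfγ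
    · rw [h]; exact hfδ
  have h0 := q_sub_C_ne_zero hq a
  have h3 : 3 ≤ (q - C a).rootMultiplicity r := by
    refine rootMult_ge_three h0 (evalsub ha.symm) (by rw [dsub]; exact hr) ?_
    rw [dsub]; exact hr2
  have := fiber_entry_le2 h0 (evalsub ha.symm) hfib
  omega

end Endpoints

section Family

variable {p : ℝ → ℂ[X]}

lemma coeff_tendsto
    (hcont : ∀ i : ℕ, ContinuousOn (fun t => (p t).coeff i) (Set.Icc (0:ℝ) 1))
    {tn : ℕ → ℝ} (htn : ∀ n, tn n ∈ Set.Icc (0:ℝ) 1) {τ : ℝ} (hτ : τ ∈ Set.Icc (0:ℝ) 1)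
    (hlim : Tendsto tn atTop (nhds τ)) (k : ℕ) :
    Tendsto (fun n => (p (tn n)).coeff k) atTop (nhds ((p τ).coeff k)) := by
  have h1 : Tendsto tn atTop (nhdsWithin τ (Set.Icc (0:ℝ) 1)) :=
    tendsto_nhdsWithin_of_tendsto_nhds_of_eventually_within _ hlim (Eventually.of_forall htn)
  exact (hcont k τ hτ).tendsto.comp h1

lemma deriv_root_bound
    (hdeg : ∀ t ∈ Set.Icc (0:ℝ) 1, (p t).degree = 5)
    (hcont : ∀ i : ℕ, ContinuousOn (fun t => (p t).coeff i) (Set.Icc (0:ℝ) 1))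
    {tn : ℕ → ℝ} (htn : ∀ n, tn n ∈ Set.Icc (0:ℝ) 1) {τ : ℝ} (hτ : τ ∈ Set.Icc (0:ℝ) 1)
    (hlim : Tendsto tn atTop (nhds τ)) {x : ℕ → ℂ}
    (hx : ∀ n, (p (tn n)).derivative.eval (x n) = 0) :
    ∃ CC : ℝ, ∀ n, x n ∈ Metric.closedBall (0:ℂ) CC := by
  have hnd : ∀ n, (p (tn n)).natDegree = 5 := fun n => q_natDegree (hdeg _ (htn n))
  have hc5 : ∀ n, (p (tn n)).coeff 5 ≠ 0 := by
    intro n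
    have := q_ne_zero (hdeg _ (htn n))
    rw [show (5:ℕ) = (p (tn n)).natDegree from (hnd n).symm]
    exact leadingCoeff_ne_zero.2 this
  set Bnd : ℕ → ℝ := fun n =>
    max 1 ((‖(p (tn n)).coeff 1‖ + ‖2*(p (tn n)).coeff 2‖ + ‖3*(p (tn n)).coeff 3‖
      + ‖4*(p (tn n)).coeff 4‖) / ‖5*(p (tn n)).coeff 5‖) with hBnd
  have hbound : ∀ n, ‖x n‖ ≤ Bnd n := by
    intro n
    have h5 : (5:ℂ) * (p (tn n)).coeff 5 ≠ 0 := by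
      intro hh
      rcases mul_eq_zero.1 hh with h | h
      · norm_num at h
      · exact hc5 n h
    refine root_bound h5 ?_
    have := evald_explicit (hnd n) (x n)
    rw [hx n] at this
    linear_combination -this
  have hden : ‖(5:ℂ) * (p τ).coeff 5‖ ≠ 0 := by
    have hτ5 : (p τ).coeff 5 ≠ 0 := by
      have := q_ne_zero (hdeg _ hτ)
      rw [show (5:ℕ) = (p τ).natDegree from (q_natDegree (hdeg _ hτ)).symm]
      exact leadingCoeff_ne_zero.2 this
    simp [hτ5]
  have hBtend : Tendsto Bnd atTop (nhds (max 1 ((‖(p τ).coeff 1‖ + ‖2*(p τ).coeff 2‖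
      + ‖3*(p τ).coeff 3‖ + ‖4*(p τ).coeff 4‖) / ‖5*(p τ).coeff 5‖))) := by
    have hck := fun k => coeff_tendsto hcont htn hτ hlim k
    refine Tendsto.max tendsto_const_nhds (Tendsto.div ?_ ?_ hden)
    · exact (((hck 1).norm.add ((tendsto_const_nhds.mul (hck 2)).norm)).add
        ((tendsto_const_nhds.mul (hck 3)).norm)).add ((tendsto_const_nhds.mul (hck 4)).norm)
    · exact (tendsto_const_nhds.mul (hck 5)).norm
  obtain ⟨CC, hCC⟩ := hBtend.bddAbove_range
  refine ⟨CC, fun n => ?_⟩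
  rw [Metric.mem_closedBall, dist_zero_right]
  exact (hbound n).trans (hCC ⟨n, rfl⟩)

end Family

section Closure

variable {p : ℝ → ℂ[X]}

lemma B_closed
    (hdeg : ∀ t ∈ Set.Icc (0:ℝ) 1, (p t).degree = 5)
    (hcont : ∀ i : ℕ, ContinuousOn (fun t => (p t).coeff i) (Set.Icc (0:ℝ) 1))
    {tn : ℕ → ℝ} (htn : ∀ n, tn n ∈ Set.Icc (0:ℝ) 1) {τ : ℝ}
    (hτ : τ ∈ Set.Icc (0:ℝ) 1) (hlim : Tendsto tn atTop (nhds τ))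
    (hB : ∀ n, PB (p (tn n))) : PB (p τ) := by
  choose r hr hr2 using hB
  obtain ⟨CC, hCC⟩ := deriv_root_bound hdeg hcont htn hτ hlim hr
  obtain ⟨ρ, -, φ, hφ, hrlim⟩ := tendsto_subseq_of_bounded Metric.isBounded_closedBall hCC
  have htn' : ∀ n, tn (φ n) ∈ Set.Icc (0:ℝ) 1 := fun n => htn (φ n)
  have hlim' : Tendsto (fun n => tn (φ n)) atTop (nhds τ) := hlim.comp hφ.tendsto_atTop
  have hck : ∀ k, Tendsto (fun n => (p (tn (φ n))).coeff k) atTop (nhds ((p τ).coeff k)) :=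
    fun k => coeff_tendsto hcont htn' hτ hlim' k
  have hnd : ∀ n, (p (tn (φ n))).natDegree = 5 := fun n => q_natDegree (hdeg _ (htn' n))
  have hndτ : (p τ).natDegree = 5 := q_natDegree (hdeg _ hτ)
  have hrlim' : Tendsto (fun n => r (φ n)) atTop (nhds ρ) := hrlim
  have hGf0 : ∀ n, Gf ((p (tn (φ n))).coeff 1) ((p (tn (φ n))).coeff 2) ((p (tn (φ n))).coeff 3)
      ((p (tn (φ n))).coeff 4) ((p (tn (φ n))).coeff 5) (r (φ n)) (r (φ n)) = 0 := by
    intro n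
    rw [idGdiag (hnd n)]
    exact hr (φ n)
  have hGx0 : ∀ n, Gxf ((p (tn (φ n))).coeff 1) ((p (tn (φ n))).coeff 2) ((p (tn (φ n))).coeff 3)
      ((p (tn (φ n))).coeff 4) ((p (tn (φ n))).coeff 5) (r (φ n)) (r (φ n)) = 0 := by
    intro n
    have h := idGxdiag (hnd n) (r (φ n))
    rw [hr2 (φ n)] at h
    rcases mul_eq_zero.1 h with h' | h'
    · norm_num at h'
    · exact h'
  have hGeq : Gf ((p τ).coeff 1) ((p τ).coeff 2) ((p τ).coeff 3) ((p τ).coeff 4)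
      ((p τ).coeff 5) ρ ρ = 0 := by
    have hGlim := tendsto7 cont7_Gf (hck 1) (hck 2) (hck 3) (hck 4) (hck 5) hrlim' hrlim'
    have h0 : Tendsto (fun n => Gf ((p (tn (φ n))).coeff 1) ((p (tn (φ n))).coeff 2)
        ((p (tn (φ n))).coeff 3) ((p (tn (φ n))).coeff 4) ((p (tn (φ n))).coeff 5)
        (r (φ n)) (r (φ n))) atTop (nhds 0) := by
      simp only [hGf0]
      exact tendsto_const_nhds
    exact tendsto_nhds_unique hGlim h0
  have hGxeq : Gxf ((p τ).coeff 1) ((p τ).coeff 2) ((p τ).coeff 3) ((p τ).coeff 4)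
      ((p τ).coeff 5) ρ ρ = 0 := by
    have hGlim := tendsto7 cont7_Gxf (hck 1) (hck 2) (hck 3) (hck 4) (hck 5) hrlim' hrlim'
    have h0 : Tendsto (fun n => Gxf ((p (tn (φ n))).coeff 1) ((p (tn (φ n))).coeff 2)
        ((p (tn (φ n))).coeff 3) ((p (tn (φ n))).coeff 4) ((p (tn (φ n))).coeff 5)
        (r (φ n)) (r (φ n))) atTop (nhds 0) := by
      simp only [hGx0]
      exact tendsto_const_nhds
    exact tendsto_nhds_unique hGlim h0
  refine ⟨ρ, ?_, ?_⟩
  · rw [← idGdiag hndτ]; exact hGeq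
  · rw [← idGxdiag hndτ, hGxeq, mul_zero]

lemma A_closed
    (hdeg : ∀ t ∈ Set.Icc (0:ℝ) 1, (p t).degree = 5)
    (hcont : ∀ i : ℕ, ContinuousOn (fun t => (p t).coeff i) (Set.Icc (0:ℝ) 1))
    {tn : ℕ → ℝ} (htn : ∀ n, tn n ∈ Set.Icc (0:ℝ) 1) {τ : ℝ}
    (hτ : τ ∈ Set.Icc (0:ℝ) 1) (hlim : Tendsto tn atTop (nhds τ))
    (hA : ∀ n, PA (p (tn n))) : PA (p τ) ∨ PM (p τ) := by
  choose r s hne hval hdr hds using hA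
  obtain ⟨CC, hCC⟩ := deriv_root_bound hdeg hcont htn hτ hlim hdr
  obtain ⟨CC', hCC'⟩ := deriv_root_bound hdeg hcont htn hτ hlim hds
  obtain ⟨ρ1, -, φ0, hφ0, hrlim0⟩ := tendsto_subseq_of_bounded Metric.isBounded_closedBall hCC
  obtain ⟨ρ2, -, ψ, hψ, hslim0⟩ := tendsto_subseq_of_bounded Metric.isBounded_closedBall
    (fun n => hCC' (φ0 n))
  set φ : ℕ → ℕ := fun n => φ0 (ψ n) with hφdef
  have hφ : StrictMono φ := hφ0.comp hψ
  have hrlim' : Tendsto (fun n => r (φ n)) atTop (nhds ρ1) := hrlim0.comp hψ.tendsto_atTop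
  have hslim' : Tendsto (fun n => s (φ n)) atTop (nhds ρ2) := hslim0
  have htn' : ∀ n, tn (φ n) ∈ Set.Icc (0:ℝ) 1 := fun n => htn (φ n)
  have hlim' : Tendsto (fun n => tn (φ n)) atTop (nhds τ) := hlim.comp hφ.tendsto_atTop
  have hck : ∀ k, Tendsto (fun n => (p (tn (φ n))).coeff k) atTop (nhds ((p τ).coeff k)) :=
    fun k => coeff_tendsto hcont htn' hτ hlim' k
  have hnd : ∀ n, (p (tn (φ n))).natDegree = 5 := fun n => q_natDegree (hdeg _ (htn' n))
  have hndτ : (p τ).natDegree = 5 := q_natDegree (hdeg _ hτ)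
  -- the per-term vanishing of the divided differences
  have hGf0 : ∀ n, Gf ((p (tn (φ n))).coeff 1) ((p (tn (φ n))).coeff 2) ((p (tn (φ n))).coeff 3)
      ((p (tn (φ n))).coeff 4) ((p (tn (φ n))).coeff 5) (r (φ n)) (s (φ n)) = 0 := by
    intro n
    have h := idG (hnd n) (r (φ n)) (s (φ n))
    rw [hval (φ n), sub_self] at h
    rcases mul_eq_zero.1 h.symm with h' | h'
    · exact absurd (sub_eq_zero.1 h') (hne (φ n))
    · exact h'
  have hGx0 : ∀ n, Gxf ((p (tn (φ n))).coeff 1) ((p (tn (φ n))).coeff 2) ((p (tn (φ n))).coeff 3)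
      ((p (tn (φ n))).coeff 4) ((p (tn (φ n))).coeff 5) (r (φ n)) (s (φ n)) = 0 := by
    intro n
    have h := idGx (hnd n) (r (φ n)) (s (φ n))
    rw [hdr (φ n), hGf0 n, zero_add] at h
    rcases mul_eq_zero.1 h.symm with h' | h'
    · exact absurd (sub_eq_zero.1 h') (hne (φ n))
    · exact h'
  have hGz0 : ∀ n, Gxf ((p (tn (φ n))).coeff 1) ((p (tn (φ n))).coeff 2) ((p (tn (φ n))).coeff 3)
      ((p (tn (φ n))).coeff 4) ((p (tn (φ n))).coeff 5) (s (φ n)) (r (φ n)) = 0 := by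
    intro n
    have h := idGz (hnd n) (r (φ n)) (s (φ n))
    rw [hds (φ n), hGf0 n, zero_sub] at h
    rcases mul_eq_zero.1 (neg_eq_zero.mp h.symm) with h' | h'
    · exact absurd (sub_eq_zero.1 h') (hne (φ n))
    · exact h'
  have hK0 : ∀ n, Kf ((p (tn (φ n))).coeff 1) ((p (tn (φ n))).coeff 2) ((p (tn (φ n))).coeff 3)
      ((p (tn (φ n))).coeff 4) ((p (tn (φ n))).coeff 5) (r (φ n)) (s (φ n)) = 0 := by
    intro n
    have h := idK ((p (tn (φ n))).coeff 1) ((p (tn (φ n))).coeff 2) ((p (tn (φ n))).coeff 3)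
      ((p (tn (φ n))).coeff 4) ((p (tn (φ n))).coeff 5) (r (φ n)) (s (φ n))
    rw [hGx0 n, hGz0 n, sub_self] at h
    rcases mul_eq_zero.1 h.symm with h' | h'
    · exact absurd (sub_eq_zero.1 h') (hne (φ n))
    · exact h'
  -- limits
  have limzero : ∀ {F : ℂ → ℂ → ℂ → ℂ → ℂ → ℂ → ℂ → ℂ},
      (Continuous fun v : ℂ × ℂ × ℂ × ℂ × ℂ × ℂ × ℂ =>
        F v.1 v.2.1 v.2.2.1 v.2.2.2.1 v.2.2.2.2.1 v.2.2.2.2.2.1 v.2.2.2.2.2.2) →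
      {x y : ℕ → ℂ} → {ax ay : ℂ} → Tendsto x atTop (nhds ax) → Tendsto y atTop (nhds ay) →
      (∀ n, F ((p (tn (φ n))).coeff 1) ((p (tn (φ n))).coeff 2) ((p (tn (φ n))).coeff 3)
        ((p (tn (φ n))).coeff 4) ((p (tn (φ n))).coeff 5) (x n) (y n) = 0) →
      F ((p τ).coeff 1) ((p τ).coeff 2) ((p τ).coeff 3) ((p τ).coeff 4) ((p τ).coeff 5)
        ax ay = 0 := by
    intro F hF x y ax ay hx hy h0
    have hlimF := tendsto7 hF (hck 1) (hck 2) (hck 3) (hck 4) (hck 5) hx hy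
    have hz : Tendsto (fun n => F ((p (tn (φ n))).coeff 1) ((p (tn (φ n))).coeff 2)
        ((p (tn (φ n))).coeff 3) ((p (tn (φ n))).coeff 4) ((p (tn (φ n))).coeff 5)
        (x n) (y n)) atTop (nhds 0) := by
      simp only [h0]
      exact tendsto_const_nhds
    exact tendsto_nhds_unique hlimF hz
  have hGfτ := limzero cont7_Gf hrlim' hslim' hGf0
  have hGxτ := limzero cont7_Gxf hrlim' hslim' hGx0
  have hGzτ := limzero cont7_Gxf hslim' hrlim' hGz0
  have hKτ := limzero cont7_Kf hrlim' hslim' hK0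
  by_cases hρ : ρ1 = ρ2
  · right
    subst hρ
    have hd1 : (p τ).derivative.eval ρ1 = 0 := by
      rw [← idGdiag hndτ]; exact hGfτ
    have hd2 : (p τ).derivative.derivative.eval ρ1 = 0 := by
      rw [← idGxdiag hndτ, hGxτ, mul_zero]
    have hd3 : (p τ).derivative.derivative.derivative.eval ρ1 = 0 := by
      rw [← idKdiag hndτ, hKτ, mul_zero]
    refine ⟨ρ1, hd1, ?_⟩
    have h0 := q_sub_C_ne_zero (hdeg _ hτ) ((p τ).eval ρ1)
    refine rootMult_ge_four h0 (evalsub rfl) ?_ ?_ ?_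
    · rw [dsub]; exact hd1
    · rw [dsub]; exact hd2
    · rw [dsub]; exact hd3
  · left
    refine ⟨ρ1, ρ2, hρ, ?_, ?_, ?_⟩
    · have h := idG hndτ ρ1 ρ2
      rw [hGfτ, mul_zero] at h
      exact sub_eq_zero.1 h
    · rw [idGx hndτ ρ1 ρ2, hGfτ, hGxτ, mul_zero, add_zero]
    · rw [idGz hndτ ρ1 ρ2, hGfτ, hGzτ, mul_zero, zero_sub, neg_zero]

end Closure

lemma one_div_pos_le (n : ℕ) : 0 < 1/((n:ℝ)+1) ∧ 1/((n:ℝ)+1) ≤ 1 := by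
  constructor
  · positivity
  · rw [div_le_one (by positivity)]
    have := Nat.cast_nonneg (α := ℝ) n
    linarith

end ZH

open ZH in
/-- The 5-edge plane trees `T₃` (both fiber multiplicity multisets `{3,1,1}`)
and `T₅` (both fiber multiplicity multisets `{2,2,1}`) are not Z-homotopic. -/
theorem T3_T5_not_Zhomotopic :
    ¬ ∃ p : ℝ → ℂ[X],
      (∀ t ∈ Set.Icc (0 : ℝ) 1, (p t).degree = 5) ∧
      (∀ i : ℕ, ContinuousOn (fun t => (p t).coeff i) (Set.Icc (0 : ℝ) 1)) ∧
      (∃ α β : ℂ, α ≠ β ∧ criticalValues (p 0) = {α, β} ∧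
        fiberMults (p 0) α = {3, 1, 1} ∧ fiberMults (p 0) β = {3, 1, 1}) ∧
      (∃ γ δ : ℂ, γ ≠ δ ∧ criticalValues (p 1) = {γ, δ} ∧
        fiberMults (p 1) γ = {2, 2, 1} ∧ fiberMults (p 1) δ = {2, 2, 1}) ∧
      (∀ t ∈ Set.Ioo (0 : ℝ) 1, (criticalValues (p t)).ncard = 3) := by
  rintro ⟨p, hdeg, hcont, ⟨α, β, hαβ, hcv0, hf0α, hf0β⟩, ⟨γ, δ, hγδ, hcv1, hf1γ, hf1δ⟩, h3⟩
  have h0mem : (0:ℝ) ∈ Set.Icc (0:ℝ) 1 := by constructor <;> norm_num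
  have h1mem : (1:ℝ) ∈ Set.Icc (0:ℝ) 1 := by constructor <;> norm_num
  have hIoo : ∀ t ∈ Set.Ioo (0:ℝ) 1, t ∈ Set.Icc (0:ℝ) 1 :=
    fun t ht => ⟨ht.1.le, ht.2.le⟩
  have hAB : ∀ t ∈ Set.Ioo (0:ℝ) 1, PA (p t) ∨ PB (p t) := by
    intro t ht
    by_contra hc
    push_neg at hc
    have h4 := critval_card_four (hdeg t (hIoo t ht)) hc.1 hc.2
    have h3t := h3 t ht
    omega
  have hnAB : ∀ t ∈ Set.Ioo (0:ℝ) 1, ¬ (PA (p t) ∧ PB (p t)) := by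
    intro t ht hc
    have h2 := critval_card_le_two_of_PA_PB (hdeg t (hIoo t ht)) hc.1 hc.2
    have h3t := h3 t ht
    omega
  have hnM : ∀ t ∈ Set.Ioo (0:ℝ) 1, ¬ PM (p t) := by
    intro t ht hc
    have h2 := critval_card_le_two_of_PM (hdeg t (hIoo t ht)) hc
    have h3t := h3 t ht
    omega
  have hA0 : ¬ PA (p 0) := not_PA_endpoint0 (hdeg 0 h0mem) hcv0 hf0α hf0β
  have hM0 : ¬ PM (p 0) := not_PM_endpoint0 (hdeg 0 h0mem) hcv0 hf0α hf0β
  have hB1 : ¬ PB (p 1) := not_PB_endpoint1 (hdeg 1 h1mem) hcv1 hf1γ hf1δ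
  have hhalf : (1/2 : ℝ) ∈ Set.Ioo (0:ℝ) 1 := by constructor <;> norm_num
  rcases hAB (1/2) hhalf with hAhalf | hBhalf
  · -- PA at 1/2 : push B-free region down to 0
    set S : Set ℝ := {t : ℝ | t ∈ Set.Ioc (0:ℝ) (1/2) ∧ PB (p t)} with hSdef
    by_cases hS : S.Nonempty
    · obtain ⟨σ, hσdef⟩ : ∃ σ' : ℝ, σ' = sSup S := ⟨_, rfl⟩
      have hbdd : BddAbove S := ⟨1/2, fun x hx => hx.1.2⟩
      obtain ⟨x₀, hx₀⟩ := hS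
      have hσub : σ ≤ 1/2 := hσdef ▸ csSup_le ⟨x₀, hx₀⟩ (fun x hx => hx.1.2)
      have hσlb : 0 < σ := lt_of_lt_of_le hx₀.1.1 (hσdef ▸ le_csSup hbdd hx₀)
      have hσicc : σ ∈ Set.Icc (0:ℝ) 1 := ⟨hσlb.le, by linarith⟩
      obtain ⟨u, -, hu_t, hu_mem⟩ := exists_seq_tendsto_sSup ⟨x₀, hx₀⟩ hbdd
      rw [← hσdef] at hu_t
      have hu_icc : ∀ n, u n ∈ Set.Icc (0:ℝ) 1 := by
        intro n
        have h := hu_mem n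
        exact ⟨h.1.1.le, by have := h.1.2; linarith⟩
      have hPBσ : PB (p σ) :=
        B_closed hdeg hcont hu_icc hσicc hu_t (fun n => (hu_mem n).2)
      by_cases hσh : σ = 1/2
      · exact hnAB (1/2) hhalf ⟨hAhalf, hσh ▸ hPBσ⟩
      · have hσlt : σ < 1/2 := lt_of_le_of_ne hσub hσh
        obtain ⟨v, hvdef⟩ : ∃ v' : ℕ → ℝ, v' = fun n : ℕ => σ + (1/2 - σ)*(1/((n:ℝ)+1)) := ⟨_, rfl⟩
        have hv_mem : ∀ n, v n ∈ Set.Ioc σ (1/2) := by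
          intro n
          obtain ⟨hp1, hp2⟩ := one_div_pos_le n
          simp only [hvdef]
          have hpos : 0 < (1/2 - σ)*(1/((n:ℝ)+1)) := mul_pos (by linarith) hp1
          have hle : (1/2 - σ)*(1/((n:ℝ)+1)) ≤ (1/2 - σ) := by nlinarith
          constructor
          · show σ < σ + (1/2 - σ)*(1/((n:ℝ)+1))
            linarith
          · show σ + (1/2 - σ)*(1/((n:ℝ)+1)) ≤ 1/2
            linarith
        have hv_ioo : ∀ n, v n ∈ Set.Ioo (0:ℝ) 1 := by
          intro n
          obtain ⟨h1, h2⟩ := hv_mem n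
          exact ⟨by linarith, by linarith⟩
        have hv_icc : ∀ n, v n ∈ Set.Icc (0:ℝ) 1 := fun n => hIoo _ (hv_ioo n)
        have hv_t : Tendsto v atTop (nhds σ) := by
          rw [hvdef]
          have hbase : Tendsto (fun n : ℕ => (1/2 - σ) * (1/((n:ℝ)+1))) atTop (nhds 0) := by
            have := tendsto_one_div_add_atTop_nhds_zero_nat.const_mul (1/2 - σ)
            rwa [mul_zero] at this
          have h2 := (tendsto_const_nhds (x := σ) (f := atTop (α := ℕ))).add hbase
          rwa [add_zero] at h2
        have hv_A : ∀ n, PA (p (v n)) := by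
          intro n
          refine (hAB (v n) (hv_ioo n)).resolve_right (fun hPB => ?_)
          have hnotin : v n ∉ S := fun hin => absurd (hσdef ▸ le_csSup hbdd hin : v n ≤ σ) (not_le.2 (hv_mem n).1)
          exact hnotin ⟨⟨(hv_ioo n).1, (hv_mem n).2⟩, hPB⟩
        have hAorM := A_closed hdeg hcont hv_icc hσicc hv_t hv_A
        have hσioo : σ ∈ Set.Ioo (0:ℝ) 1 := ⟨hσlb, by linarith⟩
        have hPAσ : PA (p σ) := hAorM.resolve_right (hnM σ hσioo)
        exact hnAB σ hσioo ⟨hPAσ, hPBσ⟩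
    · -- S empty : approach 0 with PA
      obtain ⟨w, hwdef⟩ : ∃ w' : ℕ → ℝ, w' = fun n : ℕ => (1/2:ℝ)*(1/((n:ℝ)+1)) := ⟨_, rfl⟩
      have hw_mem : ∀ n, w n ∈ Set.Ioc (0:ℝ) (1/2) := by
        intro n
        obtain ⟨hp1, hp2⟩ := one_div_pos_le n
        simp only [hwdef]
        constructor
        · show (0:ℝ) < (1/2:ℝ)*(1/((n:ℝ)+1))
          positivity
        · show (1/2:ℝ)*(1/((n:ℝ)+1)) ≤ 1/2
          nlinarith
      have hw_ioo : ∀ n, w n ∈ Set.Ioo (0:ℝ) 1 := by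
        intro n
        obtain ⟨h1, h2⟩ := hw_mem n
        exact ⟨h1, by linarith⟩
      have hw_icc : ∀ n, w n ∈ Set.Icc (0:ℝ) 1 := fun n => hIoo _ (hw_ioo n)
      have hw_t : Tendsto w atTop (nhds (0:ℝ)) := by
        rw [hwdef]
        have := tendsto_one_div_add_atTop_nhds_zero_nat.const_mul (1/2 : ℝ)
        rwa [mul_zero] at this
      have hw_A : ∀ n, PA (p (w n)) := by
        intro n
        refine (hAB (w n) (hw_ioo n)).resolve_right (fun hPB => ?_)
        exact hS ⟨w n, ⟨hw_mem n, hPB⟩⟩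
      have hAorM := A_closed hdeg hcont hw_icc h0mem hw_t hw_A
      rcases hAorM with h | h
      · exact hA0 h
      · exact hM0 h
  · -- PB at 1/2 : push A-free region up to 1
    set S : Set ℝ := {t : ℝ | t ∈ Set.Ico (1/2:ℝ) 1 ∧ PA (p t)} with hSdef
    by_cases hS : S.Nonempty
    · obtain ⟨σ, hσdef⟩ : ∃ σ' : ℝ, σ' = sInf S := ⟨_, rfl⟩
      have hbdd : BddBelow S := ⟨1/2, fun x hx => hx.1.1⟩
      obtain ⟨x₀, hx₀⟩ := hS
      have hσlb : 1/2 ≤ σ := hσdef ▸ le_csInf ⟨x₀, hx₀⟩ (fun x hx => hx.1.1)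
      have hσub : σ < 1 := lt_of_le_of_lt (hσdef ▸ csInf_le hbdd hx₀) hx₀.1.2
      have hσicc : σ ∈ Set.Icc (0:ℝ) 1 := ⟨by linarith, hσub.le⟩
      have hσioo : σ ∈ Set.Ioo (0:ℝ) 1 := ⟨by linarith, hσub⟩
      obtain ⟨u, -, hu_t, hu_mem⟩ := exists_seq_tendsto_sInf ⟨x₀, hx₀⟩ hbdd
      rw [← hσdef] at hu_t
      have hu_icc : ∀ n, u n ∈ Set.Icc (0:ℝ) 1 := by
        intro n
        have h := hu_mem n
        exact ⟨by have := h.1.1; linarith, h.1.2.le⟩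
      have hAorM := A_closed hdeg hcont hu_icc hσicc hu_t (fun n => (hu_mem n).2)
      have hPAσ : PA (p σ) := hAorM.resolve_right (hnM σ hσioo)
      by_cases hσh : σ = 1/2
      · exact hnAB (1/2) hhalf ⟨hσh ▸ hPAσ, hBhalf⟩
      · have hσgt : 1/2 < σ := lt_of_le_of_ne hσlb (Ne.symm hσh)
        obtain ⟨v, hvdef⟩ : ∃ v' : ℕ → ℝ, v' = fun n : ℕ => σ - (σ - 1/2)*(1/((n:ℝ)+1)) := ⟨_, rfl⟩
        have hv_mem : ∀ n, v n ∈ Set.Ico (1/2:ℝ) σ := by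
          intro n
          obtain ⟨hp1, hp2⟩ := one_div_pos_le n
          simp only [hvdef]
          have hpos : 0 < (σ - 1/2)*(1/((n:ℝ)+1)) := mul_pos (by linarith) hp1
          have hle : (σ - 1/2)*(1/((n:ℝ)+1)) ≤ (σ - 1/2) := by nlinarith
          constructor
          · show (1/2:ℝ) ≤ σ - (σ - 1/2)*(1/((n:ℝ)+1))
            linarith
          · show σ - (σ - 1/2)*(1/((n:ℝ)+1)) < σ
            linarith
        have hv_ioo : ∀ n, v n ∈ Set.Ioo (0:ℝ) 1 := by
          intro n
          obtain ⟨h1, h2⟩ := hv_mem n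
          exact ⟨by linarith, by linarith⟩
        have hv_icc : ∀ n, v n ∈ Set.Icc (0:ℝ) 1 := fun n => hIoo _ (hv_ioo n)
        have hv_t : Tendsto v atTop (nhds σ) := by
          rw [hvdef]
          have hbase : Tendsto (fun n : ℕ => (σ - 1/2) * (1/((n:ℝ)+1))) atTop (nhds 0) := by
            have := tendsto_one_div_add_atTop_nhds_zero_nat.const_mul (σ - 1/2)
            rwa [mul_zero] at this
          have h2 := (tendsto_const_nhds (x := σ) (f := atTop (α := ℕ))).sub hbase
          rwa [sub_zero] at h2
        have hv_B : ∀ n, PB (p (v n)) := by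
          intro n
          refine (hAB (v n) (hv_ioo n)).resolve_left (fun hPA => ?_)
          have hnotin : v n ∉ S := fun hin => absurd (hσdef ▸ csInf_le hbdd hin : σ ≤ v n) (not_le.2 (hv_mem n).2)
          exact hnotin ⟨⟨(hv_mem n).1, by have := (hv_mem n).2; linarith⟩, hPA⟩
        have hPBσ : PB (p σ) := B_closed hdeg hcont hv_icc hσicc hv_t hv_B
        exact hnAB σ hσioo ⟨hPAσ, hPBσ⟩
    · -- S empty : approach 1 with PB
      obtain ⟨w, hwdef⟩ : ∃ w' : ℕ → ℝ, w' = fun n : ℕ => 1 - (1/2:ℝ)*(1/((n:ℝ)+1)) := ⟨_, rfl⟩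
      have hw_mem : ∀ n, w n ∈ Set.Ico (1/2:ℝ) 1 := by
        intro n
        obtain ⟨hp1, hp2⟩ := one_div_pos_le n
        simp only [hwdef]
        constructor
        · show (1/2:ℝ) ≤ 1 - (1/2:ℝ)*(1/((n:ℝ)+1))
          nlinarith
        · show 1 - (1/2:ℝ)*(1/((n:ℝ)+1)) < 1
          nlinarith
      have hw_ioo : ∀ n, w n ∈ Set.Ioo (0:ℝ) 1 := by
        intro n
        obtain ⟨h1, h2⟩ := hw_mem n
        exact ⟨by linarith, h2⟩
      have hw_icc : ∀ n, w n ∈ Set.Icc (0:ℝ) 1 := fun n => hIoo _ (hw_ioo n)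
      have hw_t : Tendsto w atTop (nhds (1:ℝ)) := by
        rw [hwdef]
        have hbase : Tendsto (fun n : ℕ => (1/2:ℝ) * (1/((n:ℝ)+1))) atTop (nhds 0) := by
          have := tendsto_one_div_add_atTop_nhds_zero_nat.const_mul (1/2:ℝ)
          rwa [mul_zero] at this
        have h2 := (tendsto_const_nhds (x := (1:ℝ)) (f := atTop (α := ℕ))).sub hbase
        rwa [sub_zero] at h2
      have hw_B : ∀ n, PB (p (w n)) := by
        intro n
        refine (hAB (w n) (hw_ioo n)).resolve_left (fun hPA => ?_)
        exact hS ⟨w n, ⟨hw_mem n, hPA⟩⟩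
      exact hB1 (B_closed hdeg hcont hw_icc h1mem hw_t hw_B)
end

section
/- Let n ≥ 2 and let λ ↦ p_λ be a map from [0,1) to ℂ[X] with deg p_λ = n for all λ and all coefficients continuous in λ, such that p_0 has exactly two distinct critical values and p_λ has exactly three distinct critical values for every λ ∈ (0,1). Let a ∈ ℂ and k ≥ 2 be such that a is a root of p_0' of multiplicity exactly k − 1. Let m ≥ 2 and k_1, …, k_m ≥ 2 satisfy (k_1 − 1) + ⋯ + (k_m − 1) = k − 1, and let a_1, …, a_m : [0,1) → ℂ be continuous functions with a_i(0) = a for all i, such that for every λ ∈ (0,1) the points a_1(λ), …, a_m(λ) are pairwise distinct and a_i(λ) is a root of (p_λ)' of multiplicity exactly k_i − 1. Then the numbers p_λ(a_1(λ)), …, p_λ(a_m(λ)) cannot all be equal for every λ ∈ (0,1); that is, there exist λ ∈ (0,1) and indices i, j with p_λ(a_i(λ)) ≠ p_λ(a_j(λ)). -/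
open Polynomial Filter Topology

namespace SplitAux

def TC (l : Filter ℝ) (f : ℝ → ℂ[X]) (F : ℂ[X]) : Prop :=
  ∀ c : ℕ, Filter.Tendsto (fun t => (f t).coeff c) l (𝓝 (F.coeff c))

variable {l : Filter ℝ}

lemma TC.const (q : ℂ[X]) : TC l (fun _ => q) q := fun _ => tendsto_const_nhds

lemma TC.mul {f g : ℝ → ℂ[X]} {F G : ℂ[X]} (hf : TC l f F) (hg : TC l g G) :
    TC l (fun t => f t * g t) (F * G) := by
  intro c
  simp only [Polynomial.coeff_mul]
  exact tendsto_finset_sum _ fun x _ => (hf x.1).mul (hg x.2)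

lemma TC.pow {f : ℝ → ℂ[X]} {F : ℂ[X]} (hf : TC l f F) (e : ℕ) :
    TC l (fun t => f t ^ e) (F ^ e) := by
  induction e with
  | zero => simpa using TC.const 1
  | succ e ih => simpa [pow_succ] using ih.mul hf

lemma TC.prod {ι : Type*} (s : Finset ι) (f : ι → ℝ → ℂ[X]) (F : ι → ℂ[X])
    (h : ∀ i ∈ s, TC l (f i) (F i)) :
    TC l (fun t => ∏ i ∈ s, f i t) (∏ i ∈ s, F i) := by
  classical
  induction s using Finset.induction with
  | empty => simpa using TC.const 1
  | @insert x s hx ih =>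
    simp only [Finset.prod_insert hx]
    exact (h x (Finset.mem_insert_self _ _)).mul
      (ih fun i hi => h i (Finset.mem_insert_of_mem hi))

lemma TC.eval {f : ℝ → ℂ[X]} {F : ℂ[X]} (hf : TC l f F) {N : ℕ} (z : ℂ)
    (hd : ∀ᶠ t in l, (f t).natDegree < N) (hF : F.natDegree < N) :
    Tendsto (fun t => (f t).eval z) l (𝓝 (F.eval z)) := by
  have h1 : Tendsto (fun t => ∑ c ∈ Finset.range N, (f t).coeff c * z ^ c) l
      (𝓝 (∑ c ∈ Finset.range N, F.coeff c * z ^ c)) :=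
    tendsto_finset_sum _ fun c _ => (hf c).mul tendsto_const_nhds
  rw [← Polynomial.eval_eq_sum_range' hF z] at h1
  refine h1.congr' ?_
  filter_upwards [hd] with t ht
  exact (Polynomial.eval_eq_sum_range' ht z).symm

end SplitAux

open SplitAux

/-- If a Chebyshev polynomial `p₀` degenerates a critical point `a` of multiplicity `k`
into `m ≥ 2` critical points `a₁(λ), …, a_m(λ)` of multiplicities `k₁, …, k_m` inside a
family of Zolotarev polynomials, then the values `p_λ(a₁(λ)), …, p_λ(a_m(λ))` cannot all
be equal for every `λ ∈ (0,1)`. -/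
theorem split_values_not_all_equal (n : ℕ) (hn : 2 ≤ n) (p : ℝ → ℂ[X])
    (hdeg : ∀ t ∈ Set.Ico (0 : ℝ) 1, (p t).degree = n)
    (hcont : ∀ i : ℕ, ContinuousOn (fun t => (p t).coeff i) (Set.Ico (0 : ℝ) 1))
    (h0 : (criticalValues (p 0)).ncard = 2)
    (hZol : ∀ t ∈ Set.Ioo (0 : ℝ) 1, (criticalValues (p t)).ncard = 3)
    (a : ℂ) (k : ℕ) (hk : 2 ≤ k)
    (ha : (p 0).derivative.rootMultiplicity a = k - 1)
    (m : ℕ) (hm : 2 ≤ m) (ks : Fin m → ℕ) (hks : ∀ i, 2 ≤ ks i)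
    (hsum : ∑ i, (ks i - 1) = k - 1)
    (as : Fin m → ℝ → ℂ)
    (hascont : ∀ i, ContinuousOn (as i) (Set.Ico (0 : ℝ) 1))
    (has0 : ∀ i, as i 0 = a)
    (hdist : ∀ t ∈ Set.Ioo (0 : ℝ) 1, ∀ i j, i ≠ j → as i t ≠ as j t)
    (hmult : ∀ t ∈ Set.Ioo (0 : ℝ) 1, ∀ i,
      (p t).derivative.rootMultiplicity (as i t) = ks i - 1) :
    ∃ t ∈ Set.Ioo (0 : ℝ) 1, ∃ i j,
      (p t).eval (as i t) ≠ (p t).eval (as j t) := by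
  by_contra hcon
  push_neg at hcon
  -- basic setup
  have h0mem : (0 : ℝ) ∈ Set.Ico (0 : ℝ) 1 := ⟨le_refl _, by norm_num⟩
  have hIooIco : Set.Ioo (0 : ℝ) 1 ⊆ Set.Ico (0 : ℝ) 1 := Set.Ioo_subset_Ico_self
  set l : Filter ℝ := nhdsWithin 0 (Set.Ioo (0 : ℝ) 1) with hl
  haveI hlne : l.NeBot := by
    apply mem_closure_iff_nhdsWithin_neBot.mp
    rw [closure_Ioo (by norm_num : (0 : ℝ) ≠ 1)]
    exact ⟨le_refl _, by norm_num⟩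
  have hmemIoo : ∀ᶠ t in l, t ∈ Set.Ioo (0 : ℝ) 1 := eventually_mem_nhdsWithin
  have hle : l ≤ nhdsWithin 0 (Set.Ico (0 : ℝ) 1) := nhdsWithin_mono _ hIooIco
  have hTCp : TC l p (p 0) := fun c => ((hcont c) 0 h0mem).mono_left hle
  have hasn : ∀ i, Tendsto (as i) l (𝓝 a) := fun i => by
    have := ((hascont i) 0 h0mem).mono_left hle
    rwa [has0 i] at this
  have hnatdeg : ∀ t ∈ Set.Ico (0 : ℝ) 1, (p t).natDegree = n := fun t ht =>
    natDegree_eq_of_degree_eq_some (hdeg t ht)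
  -- the common critical value
  have hm0 : 0 < m := by omega
  set i0 : Fin m := ⟨0, hm0⟩ with hi0
  set v : ℝ → ℂ := fun t => (p t).eval (as i0 t) with hv
  set A : ℂ := (p 0).eval a with hA
  have hvA : Tendsto v l (𝓝 A) := by
    have h1 : Tendsto (fun t => ∑ c ∈ Finset.range (n + 1), (p t).coeff c * (as i0 t) ^ c) l
        (𝓝 (∑ c ∈ Finset.range (n + 1), (p 0).coeff c * a ^ c)) :=
      tendsto_finset_sum _ fun c _ => (hTCp c).mul ((hasn i0).pow c)
    have h2 : (∑ c ∈ Finset.range (n + 1), (p 0).coeff c * a ^ c) = A := by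
      rw [hA, Polynomial.eval_eq_sum_range' (n := n+1) (by rw [hnatdeg 0 h0mem]; omega) a]
    rw [h2] at h1
    refine h1.congr' ?_
    filter_upwards [hmemIoo] with t ht
    rw [hv]
    exact (Polynomial.eval_eq_sum_range' (n := n+1) (by rw [hnatdeg t (hIooIco ht)]; omega) _).symm
  have hv0 : v 0 = A := by
    have h' : v 0 = (p 0).eval (as i0 0) := rfl
    rw [h', has0 i0, ← hA]
  -- the polynomials q, Q
  set q : ℝ → ℂ[X] := fun t => p t - C (v t) with hq
  set Q : ℂ[X] := p 0 - C A with hQ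
  have hQq0 : Q = q 0 := by
    have h' : q 0 = p 0 - C (v 0) := rfl
    rw [hQ, h', hv0]
  have hTCq : TC l q Q := by
    intro c
    by_cases hc : c = 0
    · subst hc
      simpa [hq, hQ, Polynomial.coeff_sub, Polynomial.coeff_C] using (hTCp 0).sub hvA
    · simpa [hq, hQ, Polynomial.coeff_sub, Polynomial.coeff_C, hc] using (hTCp c)
  have hdegq : ∀ t ∈ Set.Ico (0 : ℝ) 1, (q t).degree = n := by
    intro t ht
    rw [hq]
    rw [Polynomial.degree_sub_C (by rw [hdeg t ht]; exact_mod_cast (by omega : 0 < n))]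
    exact hdeg t ht
  have hq0 : ∀ t ∈ Set.Ico (0 : ℝ) 1, q t ≠ 0 := by
    intro t ht h
    have := hdegq t ht
    rw [h, Polynomial.degree_zero] at this
    exact absurd this (by simp)
  have hnatdegq : ∀ t ∈ Set.Ico (0 : ℝ) 1, (q t).natDegree = n := fun t ht =>
    natDegree_eq_of_degree_eq_some (hdegq t ht)
  -- total multiplicity
  set K : ℕ := ∑ i, ks i with hKdef
  have hKval : K = (k - 1) + m := by
    rw [hKdef]
    have : ∀ i : Fin m, ks i = (ks i - 1) + 1 := fun i => by have := hks i; omega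
    calc (∑ i, ks i) = ∑ i, ((ks i - 1) + 1) := Finset.sum_congr rfl fun i _ => this i
    _ = (∑ i, (ks i - 1)) + ∑ _i : Fin m, 1 := Finset.sum_add_distrib
    _ = (k - 1) + m := by rw [hsum]; simp
  -- the divisor polynomials
  set d : ℝ → ℂ[X] := fun t => ∏ i, (X - C (as i t)) ^ ks i with hd
  set D : ℂ[X] := (X - C a) ^ K with hD
  have hmonicd : ∀ t, (d t).Monic := fun t =>
    monic_prod_of_monic _ _ fun i _ => (monic_X_sub_C _).pow _
  have hnatdegd : ∀ t, (d t).natDegree = K := by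
    intro t
    rw [hd]
    rw [Polynomial.natDegree_prod_of_monic _ _ fun i _ => (monic_X_sub_C _).pow _]
    simp [Polynomial.natDegree_pow, Polynomial.natDegree_X_sub_C]
    exact hKdef.symm
  have hTCd : TC l d D := by
    have hDprod : D = ∏ i : Fin m, (X - C a) ^ ks i := by
      rw [hD, Finset.prod_pow_eq_pow_sum]
    rw [hDprod]
    refine TC.prod _ _ _ fun i _ => ?_
    refine TC.pow ?_ (ks i)
    intro c
    by_cases hc : c = 0
    · subst hc
      simpa [Polynomial.coeff_sub, Polynomial.coeff_C] using
        (tendsto_const_nhds (x := (0:ℂ))).sub (hasn i)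
    · simp only [Polynomial.coeff_sub, Polynomial.coeff_C, if_neg hc, sub_zero]
      exact tendsto_const_nhds
  -- divisibility on Ioo
  have hdvd : ∀ t ∈ Set.Ioo (0 : ℝ) 1, d t ∣ q t := by
    intro t ht
    have hq0t : q t ≠ 0 := hq0 t (hIooIco ht)
    have hroot : ∀ i, (q t).IsRoot (as i t) := by
      intro i
      simp only [hq, Polynomial.IsRoot, Polynomial.eval_sub, Polynomial.eval_C]
      rw [hv, sub_eq_zero]
      exact hcon t ht i i0
    have hmulti : ∀ i, (q t).rootMultiplicity (as i t) = ks i := by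
      intro i
      have hder : (derivative (q t)).rootMultiplicity (as i t) = ks i - 1 := by
        have : derivative (q t) = derivative (p t) := by
          rw [hq]; simp
        rw [this]; exact hmult t ht i
      have h1 := Polynomial.derivative_rootMultiplicity_of_root (hroot i)
      have h2 := (Polynomial.rootMultiplicity_pos hq0t).mpr (hroot i)
      have h3 := hks i
      omega
    have heach : ∀ i : Fin m, (X - C (as i t)) ^ ks i ∣ q t := fun i => by
      rw [← hmulti i]; exact Polynomial.pow_rootMultiplicity_dvd (q t) (as i t)
    have hinj : Function.Injective (fun i => as i t) := by
      intro i j hij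
      by_contra hne
      exact hdist t ht i j hne hij
    refine Finset.prod_dvd_of_coprime ?_ fun i _ => heach i
    intro i _ j _ hij
    exact ((Polynomial.pairwise_coprime_X_sub_C hinj) hij).pow
  -- K ≤ n
  have hhalf : (1/2 : ℝ) ∈ Set.Ioo (0 : ℝ) 1 := by norm_num
  have hKn : K ≤ n := by
    have := Polynomial.natDegree_le_of_dvd (hdvd _ hhalf) (hq0 _ (hIooIco hhalf))
    rwa [hnatdegd, hnatdegq _ (hIooIco hhalf)] at this
  -- the quotient
  set N : ℕ := n - K with hN
  set r : ℝ → ℂ[X] := fun t => q t /ₘ d t with hr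
  have hqdr : ∀ t ∈ Set.Ioo (0 : ℝ) 1, q t = d t * r t := by
    intro t ht
    have := Polynomial.modByMonic_add_div (q t) (d t)
    rw [(Polynomial.modByMonic_eq_zero_iff_dvd (hmonicd t)).mpr (hdvd t ht), zero_add] at this
    exact this.symm
  have hnatdegr : ∀ t ∈ Set.Ioo (0 : ℝ) 1, (r t).natDegree = N := by
    intro t ht
    rw [hr]
    rw [Polynomial.natDegree_divByMonic _ (hmonicd t), hnatdegq t (hIooIco ht), hnatdegd]
  -- nodes for interpolation
  set w : Fin (N + 1) → ℂ := fun c => a + ((c : ℕ) + 1 : ℕ) with hw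
  have hwinj : Set.InjOn w (Finset.univ : Finset (Fin (N + 1))) := by
    intro c _ c' _ h
    rw [hw] at h
    simp only [add_right_inj, Nat.cast_inj] at h
    exact Fin.ext (by omega)
  have hwa : ∀ c, w c - a = (((c : ℕ) + 1 : ℕ) : ℂ) := fun c => by rw [hw]; ring
  have hDw : ∀ c, D.eval (w c) ≠ 0 := by
    intro c
    rw [hD]
    simp only [Polynomial.eval_pow, Polynomial.eval_sub, Polynomial.eval_X, Polynomial.eval_C]
    rw [show w c - a = (((c : ℕ) + 1 : ℕ) : ℂ) from hwa c]
    exact pow_ne_zero _ (Nat.cast_ne_zero.mpr (Nat.succ_ne_zero _))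
  have hdw : ∀ z : ℂ, Tendsto (fun t => (d t).eval z) l (𝓝 (D.eval z)) := by
    intro z
    refine hTCd.eval (N := K + 1) z ?_ ?_
    · exact Eventually.of_forall fun t => by rw [hnatdegd]; omega
    · have hDnat : D.natDegree = K := by
        rw [hD]
        simp [Polynomial.natDegree_pow]
      rw [hDnat]; omega
  have hqw : ∀ z : ℂ, Tendsto (fun t => (q t).eval z) l (𝓝 (Q.eval z)) := by
    intro z
    refine hTCq.eval (N := n + 1) z ?_ ?_
    · filter_upwards [hmemIoo] with t ht
      rw [hnatdegq t (hIooIco ht)]; omega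
    · rw [hQq0, hnatdegq 0 h0mem]; omega
  have hQ0 : Q ≠ 0 := by
    rw [hQq0]
    exact hq0 0 h0mem
  -- values of the quotient converge
  have hrw : ∀ c : Fin (N + 1), Tendsto (fun t => (r t).eval (w c)) l
      (𝓝 (Q.eval (w c) / D.eval (w c))) := by
    intro c
    have hdne : ∀ᶠ t in l, (d t).eval (w c) ≠ 0 := (hdw (w c)).eventually_ne (hDw c)
    have hlim : Tendsto (fun t => (q t).eval (w c) / (d t).eval (w c)) l
        (𝓝 (Q.eval (w c) / D.eval (w c))) := (hqw (w c)).div (hdw (w c)) (hDw c)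
    refine hlim.congr' ?_
    filter_upwards [hdne, hmemIoo] with t htd ht
    rw [hqdr t ht, Polynomial.eval_mul]
    field_simp
  -- the limit quotient polynomial
  classical
  set vals : Fin (N + 1) → ℂ := fun c => Q.eval (w c) / D.eval (w c) with hvals
  set R : ℂ[X] := Lagrange.interpolate Finset.univ w vals with hR
  have hcard : (Finset.univ : Finset (Fin (N + 1))).card = N + 1 := by simp
  have hTCr : TC l r R := by
    intro c
    have hcoeffR : R.coeff c = ∑ i, vals i * (Lagrange.basis Finset.univ w i).coeff c := by
      rw [hR, Lagrange.interpolate_apply, Polynomial.finset_sum_coeff]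
      exact Finset.sum_congr rfl fun i _ => by rw [Polynomial.coeff_C_mul]
    rw [hcoeffR]
    have hlim : Tendsto (fun t => ∑ i, (r t).eval (w i) *
        (Lagrange.basis Finset.univ w i).coeff c) l
        (𝓝 (∑ i, vals i * (Lagrange.basis Finset.univ w i).coeff c)) :=
      tendsto_finset_sum _ fun i _ => (hrw i).mul tendsto_const_nhds
    refine hlim.congr' ?_
    filter_upwards [hmemIoo] with t ht
    have hdegr : (r t).degree < ((Finset.univ : Finset (Fin (N + 1))).card : ℕ) := by
      rw [hcard]
      calc (r t).degree ≤ ((r t).natDegree : WithBot ℕ) := Polynomial.degree_le_natDegree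
      _ < ((N + 1 : ℕ) : WithBot ℕ) := by
          rw [hnatdegr t ht]
          exact_mod_cast Nat.lt_succ_self N
    have hrt := Lagrange.eq_interpolate hwinj hdegr
    conv_rhs => rw [hrt]
    rw [Lagrange.interpolate_apply, Polynomial.finset_sum_coeff]
    exact (Finset.sum_congr rfl fun i _ => by rw [Polynomial.coeff_C_mul]).symm
  -- take limits in q = d * r
  have hQDR : Q = D * R := by
    ext c
    have h1 : Tendsto (fun t => (d t * r t).coeff c) l (𝓝 ((D * R).coeff c)) :=
      (hTCd.mul hTCr) c
    have h2 : Tendsto (fun t => (d t * r t).coeff c) l (𝓝 (Q.coeff c)) := by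
      refine (hTCq c).congr' ?_
      filter_upwards [hmemIoo] with t ht
      rw [← hqdr t ht]
    exact tendsto_nhds_unique h2 h1
  -- final contradiction via root multiplicities
  have hKle : K ≤ Q.rootMultiplicity a := by
    rw [Polynomial.le_rootMultiplicity_iff hQ0]
    exact ⟨R, by rw [hQDR, hD]⟩
  have hQroot : Q.IsRoot a := by
    rw [hQ]
    simp [hA]
  have hQmult : Q.rootMultiplicity a = k := by
    have hder : (derivative Q).rootMultiplicity a = k - 1 := by
      have : derivative Q = derivative (p 0) := by rw [hQ]; simp
      rw [this]; exact ha
    have h1 := Polynomial.derivative_rootMultiplicity_of_root hQroot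
    have h2 := (Polynomial.rootMultiplicity_pos hQ0).mpr hQroot
    omega
  rw [hQmult] at hKle
  omega
end

section
/- Let p ∈ ℂ[X] have degree n ≥ 1 and exactly three distinct critical values α, β, γ (that is, the image of the set of roots of p' under evaluation by p is exactly {α, β, γ} with α, β, γ pairwise distinct). Let r, s, t be the numbers of distinct roots of p − α, p − β, p − γ respectively. Then r + s + t = 2n + 1. -/
open Polynomial

open scoped Classical

lemma fiber_count (p : ℂ[X]) (n : ℕ) (hn : 1 ≤ n) (hdeg : p.degree = n) (c : ℂ) :
    (p - C c).roots.toFinset.card +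
      Multiset.card (p.derivative.roots.filter (fun x => p.eval x = c)) = n := by
  have hp0 : p ≠ 0 := fun h => by simp [h] at hdeg
  have hdegpos : 0 < p.degree := by rw [hdeg]; exact_mod_cast Nat.pos_of_ne_zero (by omega)
  have hpc_deg : (p - C c).degree = n := by rw [degree_sub_C hdegpos, hdeg]
  have hpc0 : p - C c ≠ 0 := fun h => by simp [h] at hpc_deg
  have hq0 : p.derivative ≠ 0 := by
    intro h
    have := natDegree_eq_zero_of_derivative_eq_zero h
    rw [natDegree_eq_of_degree_eq_some hdeg] at this; omega
  have hcard : Multiset.card (p - C c).roots = n := by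
    rw [splits_iff_card_roots.mp (IsAlgClosed.splits _),
      natDegree_eq_of_degree_eq_some hpc_deg]
  have key : ∀ x ∈ (p - C c).roots.toFinset,
      Multiset.count x (p - C c).roots = Multiset.count x p.derivative.roots + 1 := by
    intro x hx
    rw [Multiset.mem_toFinset, mem_roots hpc0] at hx
    rw [count_roots, count_roots]
    have hd : derivative (p - C c) = p.derivative := by simp
    have := derivative_rootMultiplicity_of_root (p := p - C c) (t := x) hx
    rw [hd] at this
    have hpos : 0 < (p - C c).rootMultiplicity x :=
      (rootMultiplicity_pos hpc0).mpr hx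
    omega
  have hsum : Multiset.card (p - C c).roots =
      ∑ x ∈ (p - C c).roots.toFinset, Multiset.count x (p - C c).roots :=
    (Multiset.toFinset_sum_count_eq _).symm
  have hfil : Multiset.card (p.derivative.roots.filter (fun x => p.eval x = c)) =
      ∑ x ∈ (p - C c).roots.toFinset, Multiset.count x p.derivative.roots := by
    set M := p.derivative.roots.filter (fun x => p.eval x = c) with hM
    have hsub : M.toFinset ⊆ (p - C c).roots.toFinset := by
      intro x hx
      rw [Multiset.mem_toFinset, hM, Multiset.mem_filter] at hx
      rw [Multiset.mem_toFinset, mem_roots hpc0]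
      simp [IsRoot, hx.2]
    calc Multiset.card M = ∑ x ∈ M.toFinset, Multiset.count x M :=
          (Multiset.toFinset_sum_count_eq _).symm
      _ = ∑ x ∈ (p - C c).roots.toFinset, Multiset.count x M := by
          refine Finset.sum_subset hsub (fun x _ hx => ?_)
          rw [Multiset.mem_toFinset] at hx
          exact Multiset.count_eq_zero_of_notMem hx
      _ = ∑ x ∈ (p - C c).roots.toFinset, Multiset.count x p.derivative.roots := by
          refine Finset.sum_congr rfl (fun x hx => ?_)
          rw [Multiset.mem_toFinset, mem_roots hpc0] at hx
          have hx' : p.eval x = c := by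
            have := hx; simp [IsRoot] at this; linear_combination this
          rw [hM, Multiset.count_filter, if_pos hx']
  rw [hsum, Finset.sum_congr rfl key, Finset.sum_add_distrib] at hcard
  simp only [Finset.sum_const, smul_eq_mul, mul_one] at hcard
  rw [hfil]
  omega

/-- For a degree-`n` polynomial with exactly three distinct critical values `α, β, γ`,
the numbers `r, s, t` of distinct roots of `p - α`, `p - β`, `p - γ` satisfy
`r + s + t = 2n + 1`. -/
theorem zolotarev_fiber_count (p : ℂ[X]) (n : ℕ) (hn : 1 ≤ n) (hdeg : p.degree = n)
    (α β γ : ℂ) (hαβ : α ≠ β) (hαγ : α ≠ γ) (hβγ : β ≠ γ)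
    (hcv : criticalValues p = {α, β, γ}) :
    (p - C α).roots.toFinset.card + (p - C β).roots.toFinset.card +
      (p - C γ).roots.toFinset.card = 2 * n + 1 := by
  have hq0 : p.derivative ≠ 0 := by
    intro h
    have := natDegree_eq_zero_of_derivative_eq_zero h
    rw [natDegree_eq_of_degree_eq_some hdeg] at this; omega
  have hmem : ∀ x ∈ p.derivative.roots, p.eval x = α ∨ p.eval x = β ∨ p.eval x = γ := by
    intro x hx
    rw [mem_roots hq0] at hx
    have : p.eval x ∈ criticalValues p := ⟨x, hx, rfl⟩
    rw [hcv] at this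
    simpa using this
  have hp0 : p ≠ 0 := fun h => by simp [h] at hdeg
  have hqdeg : p.derivative.natDegree = n - 1 := by
    have hnd : p.natDegree = n := natDegree_eq_of_degree_eq_some hdeg
    refine le_antisymm (by simpa [hnd] using natDegree_derivative_le p) ?_
    refine le_natDegree_of_ne_zero ?_
    rw [coeff_derivative]
    have h1 : p.coeff (n - 1 + 1) ≠ 0 := by
      rw [show n - 1 + 1 = n by omega, ← hnd]
      exact leadingCoeff_ne_zero.mpr hp0
    have h2 : ((n - 1 : ℕ) + 1 : ℂ) ≠ 0 := by
      exact_mod_cast (Nat.succ_ne_zero (n - 1))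
    exact mul_ne_zero h1 h2
  have hqcard : Multiset.card p.derivative.roots = n - 1 := by
    rw [splits_iff_card_roots.mp (IsAlgClosed.splits _), hqdeg]
  set s := p.derivative.roots.filter (fun x => ¬ p.eval x = α) with hs
  have e1 : Multiset.card (p.derivative.roots.filter (fun x => p.eval x = α)) +
      Multiset.card s = n - 1 := by
    rw [hs, ← Multiset.card_add, Multiset.filter_add_not, hqcard]
  have e2 : Multiset.card (s.filter (fun x => p.eval x = β)) +
      Multiset.card (s.filter (fun x => ¬ p.eval x = β)) = Multiset.card s := by
    rw [← Multiset.card_add, Multiset.filter_add_not]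
  have h1 : s.filter (fun x => p.eval x = β) =
      p.derivative.roots.filter (fun x => p.eval x = β) := by
    rw [hs, Multiset.filter_filter]
    refine Multiset.filter_congr (fun x _ => ?_)
    constructor
    · exact fun h => h.1
    · exact fun h => ⟨h, fun hc => hαβ (hc.symm.trans h)⟩
  have h2 : s.filter (fun x => ¬ p.eval x = β) =
      p.derivative.roots.filter (fun x => p.eval x = γ) := by
    rw [hs, Multiset.filter_filter]
    refine Multiset.filter_congr (fun x hx => ?_)
    have hm := hmem x hx
    constructor
    · rintro ⟨ha, hb⟩; tauto
    · exact fun h => ⟨fun hc => hβγ (hc.symm.trans h), fun hc => hαγ (hc.symm.trans h)⟩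
  rw [h1, h2] at e2
  have hα := fiber_count p n hn hdeg α
  have hβ := fiber_count p n hn hdeg β
  have hγ := fiber_count p n hn hdeg γ
  omega
end

section
/- Let p ∈ ℂ[X] have degree n ≥ 1 and exactly two distinct critical values α, β (that is, the image of the set of roots of p' under evaluation by p is exactly {α, β} with α ≠ β). Let r and s be the numbers of distinct roots of p − α and of p − β respectively. Then r + s = n + 1. -/
open Polynomial

lemma card_roots_eq_natDegree_C (p : ℂ[X]) : p.roots.card = p.natDegree :=
  Polynomial.splits_iff_card_roots.mp (IsAlgClosed.splits p)

lemma fiber_key (p : ℂ[X]) (n : ℕ) (hn : 1 ≤ n) (hdeg : p.degree = n) (c : ℂ) :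
    (p - C c).roots.toFinset.card
      + ∑ x ∈ (p - C c).roots.toFinset, p.derivative.rootMultiplicity x = n := by
  have hd : (p - C c).degree = n := by
    rw [degree_sub_C]; · exact hdeg
    · rw [hdeg]; exact_mod_cast Nat.lt_of_lt_of_le Nat.zero_lt_one hn
  have hq0 : p - C c ≠ 0 := fun h => by simp [h] at hd
  have hder : (p - C c).derivative = p.derivative := by
    simp [derivative_sub]
  have hnd : (p - C c).natDegree = n := natDegree_eq_of_degree_eq_some hd
  have hsum : ∑ x ∈ (p - C c).roots.toFinset, (p - C c).rootMultiplicity x = n := by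
    rw [← hnd, ← card_roots_eq_natDegree_C (p - C c)]
    rw [← Multiset.toFinset_sum_count_eq]
    exact Finset.sum_congr rfl fun x hx => by rw [count_roots]
  calc (p - C c).roots.toFinset.card
      + ∑ x ∈ (p - C c).roots.toFinset, p.derivative.rootMultiplicity x
      = ∑ x ∈ (p - C c).roots.toFinset, (1 + p.derivative.rootMultiplicity x) := by
        rw [Finset.sum_add_distrib, Finset.sum_const, smul_eq_mul, mul_one]
    _ = ∑ x ∈ (p - C c).roots.toFinset, (p - C c).rootMultiplicity x := by
        refine Finset.sum_congr rfl fun x hx => ?_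
        have hroot : (p - C c).IsRoot x := isRoot_of_mem_roots (Multiset.mem_toFinset.mp hx)
        have h1 : 1 ≤ (p - C c).rootMultiplicity x :=
          (rootMultiplicity_pos hq0).mpr hroot
        rw [← hder, derivative_rootMultiplicity_of_root hroot]
        omega
    _ = n := hsum

/-- For a degree-`n` polynomial with exactly two distinct critical values `α, β`,
the numbers `r, s` of distinct roots of `p - α` and `p - β` satisfy `r + s = n + 1`. -/
theorem chebyshev_fiber_count (p : ℂ[X]) (n : ℕ) (hn : 1 ≤ n) (hdeg : p.degree = n)
    (α β : ℂ) (hαβ : α ≠ β)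
    (hcv : criticalValues p = {α, β}) :
    (p - C α).roots.toFinset.card + (p - C β).roots.toFinset.card = n + 1 := by
  have hndp : p.natDegree = n := natDegree_eq_of_degree_eq_some hdeg
  have hnd0 : 0 < p.natDegree := by omega
  have hddeg : p.derivative.degree = ((n - 1 : ℕ) : WithBot ℕ) := by
    rw [degree_derivative_eq p hnd0, hndp]
  have hdnat : p.derivative.natDegree = n - 1 := natDegree_eq_of_degree_eq_some hddeg
  set Fα := (p - C α).roots.toFinset with hFα
  set Fβ := (p - C β).roots.toFinset with hFβ
  -- nonvanishing of p - C c
  have hq0 : ∀ c : ℂ, p - C c ≠ 0 := by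
    intro c h
    have hd : (p - C c).degree = n := by
      rw [degree_sub_C]; · exact hdeg
      · rw [hdeg]; exact_mod_cast Nat.lt_of_lt_of_le Nat.zero_lt_one hn
    simp [h] at hd
  -- disjointness of the two fibers
  have hdisj : Disjoint Fα Fβ := by
    rw [Finset.disjoint_left]
    intro x hxα hxβ
    have h1 : (p - C α).IsRoot x := isRoot_of_mem_roots (Multiset.mem_toFinset.mp hxα)
    have h2 : (p - C β).IsRoot x := isRoot_of_mem_roots (Multiset.mem_toFinset.mp hxβ)
    simp only [IsRoot, eval_sub, eval_C, sub_eq_zero] at h1 h2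
    exact hαβ (h1.symm.trans h2)
  -- roots of p' lie in the union of fibers
  have hsub : p.derivative.roots.toFinset ⊆ Fα ∪ Fβ := by
    intro x hx
    have hx' : p.derivative.eval x = 0 :=
      isRoot_of_mem_roots (Multiset.mem_toFinset.mp hx)
    have hmem : p.eval x ∈ criticalValues p := ⟨x, hx', rfl⟩
    rw [hcv] at hmem
    rcases hmem with h | h
    · refine Finset.mem_union_left _ ?_
      rw [hFα, Multiset.mem_toFinset, mem_roots (hq0 α)]
      simp [IsRoot, h]
    · refine Finset.mem_union_right _ ?_
      rw [hFβ, Multiset.mem_toFinset, mem_roots (hq0 β)]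
      simp [Set.mem_singleton_iff.mp h]
  -- total multiplicity of roots of p'
  have htot : ∑ x ∈ Fα ∪ Fβ, p.derivative.rootMultiplicity x = n - 1 := by
    have h1 : ∑ x ∈ p.derivative.roots.toFinset, p.derivative.rootMultiplicity x
        = n - 1 := by
      rw [← hdnat, ← card_roots_eq_natDegree_C p.derivative, ← Multiset.toFinset_sum_count_eq]
      exact Finset.sum_congr rfl fun x hx => by rw [count_roots]
    have hder0 : p.derivative ≠ 0 := by
      intro h0; rw [h0] at hddeg; simp at hddeg
    rw [← Finset.sum_subset hsub (fun x _ hx => ?_), h1]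
    rw [rootMultiplicity_eq_zero_iff]
    intro h
    exact absurd (Multiset.mem_toFinset.mpr ((mem_roots hder0).mpr h)) hx
  rw [Finset.sum_union hdisj] at htot
  have hα := fiber_key p n hn hdeg α
  have hβ := fiber_key p n hn hdeg β
  rw [← hFα] at hα
  rw [← hFβ] at hβ
  omega
end
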